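/- arXiv:1212.3708 — 3 statements merged into one kernel-verified Lean document; each statement's English description precedes it below -/
import Mathlib

section
/- Let X be a set and Γ = F(X) the free group on X. For each function ν : X → [1,∞), let ν̄ : Γ → [1,∞) be defined on a reduced word g = x₁^{n₁}⋯x_k^{n_k} by ν̄(g) = ∏_{i=1}^k ν(x_i)^{|n_i|}, and let ℝ[Γ]^∧ν be the Banach algebra obtained by completing the real group algebra ℝ[Γ] with respect to the norm ‖∑_γ λ_γ γ‖_{1,ν} = ∑_γ |λ_γ|·ν̄(γ). Order the set [1,∞)^X pointwise (a directed set). Then for every unital real Banach algebra A there is a bijection, natural in A, between the set of group homomorphisms Γ → Aˣ and the colimit over ν ∈ [1,∞)^X of the sets of continuous unital algebra homomorphisms ℝ[Γ]^∧ν → A. In other words, the functor A ↦ Hom_Grp(F(X), Aˣ) on unital real Banach algebras is pro-representable by the inverse system {ℝ[Γ]^∧ν}_ν. -/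
open scoped BigOperators

/-- Unital real Banach algebras, with continuous unital algebra homomorphisms. -/
structure BanAlg : Type 1 where
  carrier : Type
  [isNormedRing : NormedRing carrier]
  [isNormedAlgebra : NormedAlgebra ℝ carrier]
  [isCompleteSpace : CompleteSpace carrier]

attribute [instance] BanAlg.isNormedRing BanAlg.isNormedAlgebra BanAlg.isCompleteSpace

instance : CoeSort BanAlg Type := ⟨BanAlg.carrier⟩

/-- The weight `ν̄ : FreeGroup X → ℝ` induced by `ν : X → ℝ`: for the reduced word
`g = x₁^{n₁} ⋯ x_k^{n_k}` it is `∏ i, ν (x_i) ^ |n_i|`. -/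
noncomputable def freeGroupWeight {X : Type} [DecidableEq X] (ν : X → ℝ)
    (g : FreeGroup X) : ℝ :=
  ((FreeGroup.toWord g).map fun p => ν p.1).prod

/-- The weighted `ℓ¹`-norm `‖∑ λ_γ γ‖_{1,ν} = ∑ |λ_γ|·ν̄(γ)` on the real group algebra
of the free group. -/
noncomputable def weightedNorm {X : Type} [DecidableEq X] (ν : X → ℝ)
    (p : MonoidAlgebra ℝ (FreeGroup X)) : ℝ :=
  ∑ γ ∈ p.coeff.support, |p.coeff γ| * freeGroupWeight ν γ

/-! ### Auxiliary list lemmas (over `ℝ`) -/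

lemma list_one_le_prod {l : List ℝ} (h : ∀ a ∈ l, 1 ≤ a) : (1 : ℝ) ≤ l.prod := by
  induction l with
  | nil => simp
  | cons a t ih =>
    simp only [List.mem_cons, forall_eq_or_imp] at h
    have ht := ih h.2
    have ha := h.1
    rw [List.prod_cons]
    nlinarith

lemma list_sublist_prod_le : ∀ {l₁ l₂ : List ℝ}, List.Sublist l₁ l₂ → (∀ a ∈ l₂, 1 ≤ a) →
    l₁.prod ≤ l₂.prod := by
  intro l₁ l₂ h
  induction h with
  | slnil => intro _; simp
  | @cons t₁ t₂ a hsub ih =>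
    intro h₁
    simp only [List.mem_cons, forall_eq_or_imp] at h₁
    have h2 := ih h₁.2
    have hpos : (0:ℝ) ≤ t₂.prod := zero_le_one.trans (list_one_le_prod h₁.2)
    rw [List.prod_cons]
    exact h2.trans (le_mul_of_one_le_left hpos h₁.1)
  | @cons_cons t₁ t₂ a hsub ih =>
    intro h₁
    simp only [List.mem_cons, forall_eq_or_imp] at h₁
    rw [List.prod_cons, List.prod_cons]
    exact mul_le_mul_of_nonneg_left (ih h₁.2) (zero_le_one.trans h₁.1)

lemma list_prod_le_prod {α : Type*} {l : List α} {f g : α → ℝ}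
    (h0 : ∀ a ∈ l, 0 ≤ f a) (h : ∀ a ∈ l, f a ≤ g a) :
    (l.map f).prod ≤ (l.map g).prod := by
  induction l with
  | nil => simp
  | cons a t ih =>
    simp only [List.mem_cons, forall_eq_or_imp] at h0 h
    simp only [List.map_cons, List.prod_cons]
    have hf : (0:ℝ) ≤ (t.map f).prod := by
      apply List.prod_nonneg
      intro x hx
      obtain ⟨y, hy, rfl⟩ := List.mem_map.1 hx
      exact h0.2 y hy
    exact mul_le_mul (h.1) (ih h0.2 h.2) hf ((h0.1).trans h.1)

/-! ### Weight lemmas -/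

section Weight

variable {X : Type} [DecidableEq X] {ν : X → ℝ}

lemma fgw_mem_le (hν : ∀ x, 1 ≤ ν x) {g : FreeGroup X} : ∀ a ∈ (g.toWord.map fun p => ν p.1), (1:ℝ) ≤ a := by
  intro a ha
  obtain ⟨p, _, rfl⟩ := List.mem_map.1 ha
  exact hν p.1

lemma one_le_fgw (hν : ∀ x, 1 ≤ ν x) (g : FreeGroup X) : 1 ≤ freeGroupWeight ν g :=
  list_one_le_prod (fgw_mem_le hν)

lemma fgw_nonneg (hν : ∀ x, 1 ≤ ν x) (g : FreeGroup X) : 0 ≤ freeGroupWeight ν g :=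
  zero_le_one.trans (one_le_fgw hν g)

lemma fgw_pos (hν : ∀ x, 1 ≤ ν x) (g : FreeGroup X) : 0 < freeGroupWeight ν g :=
  lt_of_lt_of_le one_pos (one_le_fgw hν g)

lemma fgw_one : freeGroupWeight ν (1 : FreeGroup X) = 1 := by
  simp [freeGroupWeight, FreeGroup.toWord_one]

lemma fgw_mul_le (hν : ∀ x, 1 ≤ ν x) (g h : FreeGroup X) :
    freeGroupWeight ν (g * h) ≤ freeGroupWeight ν g * freeGroupWeight ν h := by
  unfold freeGroupWeight
  have hsub := (FreeGroup.toWord_mul_sublist g h).map (fun p : X × Bool => ν p.1)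
  rw [List.map_append] at hsub
  calc ((g*h).toWord.map fun p => ν p.1).prod
      ≤ ((g.toWord.map fun p => ν p.1) ++ (h.toWord.map fun p => ν p.1)).prod := by
        apply list_sublist_prod_le hsub
        intro a ha
        rcases List.mem_append.1 ha with ha | ha
        · obtain ⟨p, _, rfl⟩ := List.mem_map.1 ha; exact hν p.1
        · obtain ⟨p, _, rfl⟩ := List.mem_map.1 ha; exact hν p.1
    _ = _ := List.prod_append

lemma fgw_mono {ν₁ ν₂ : X → ℝ} (h1 : ∀ x, 1 ≤ ν₁ x) (hle : ∀ x, ν₁ x ≤ ν₂ x)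
    (g : FreeGroup X) : freeGroupWeight ν₁ g ≤ freeGroupWeight ν₂ g := by
  unfold freeGroupWeight
  exact list_prod_le_prod (fun a _ => zero_le_one.trans (h1 a.1)) (fun a _ => hle a.1)

end Weight

/-! ### weightedNorm lemmas -/

section WN

variable {X : Type} [DecidableEq X] {ν : X → ℝ}

lemma wn_eq_sum_subset {p : MonoidAlgebra ℝ (FreeGroup X)} {s : Finset (FreeGroup X)}
    (hs : p.coeff.support ⊆ s) :
    weightedNorm ν p = ∑ γ ∈ s, |p.coeff γ| * freeGroupWeight ν γ := by
  refine Finset.sum_subset hs ?_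
  intro γ _ hγ
  rw [Finsupp.notMem_support_iff.1 hγ]
  simp

lemma wn_nonneg (hν : ∀ x, 1 ≤ ν x) (p : MonoidAlgebra ℝ (FreeGroup X)) : 0 ≤ weightedNorm ν p :=
  Finset.sum_nonneg fun γ _ => mul_nonneg (abs_nonneg _) (fgw_nonneg hν γ)

lemma wn_zero : weightedNorm ν (0 : MonoidAlgebra ℝ (FreeGroup X)) = 0 := by
  simp [weightedNorm]

lemma wn_eq_zero (hν : ∀ x, 1 ≤ ν x) {p : MonoidAlgebra ℝ (FreeGroup X)} :
    weightedNorm ν p = 0 ↔ p = 0 := by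
  constructor
  · intro h
    have := (Finset.sum_eq_zero_iff_of_nonneg
      (fun γ _ => mul_nonneg (abs_nonneg _) (fgw_nonneg hν γ))).1 h
    ext γ
    by_cases hγ : γ ∈ p.coeff.support
    · have := this γ hγ
      have hw := fgw_pos hν γ
      have : |p.coeff γ| = 0 := by
        rcases mul_eq_zero.1 this with h' | h'
        · exact h'
        · exact absurd h' (ne_of_gt hw)
      simpa using abs_eq_zero.1 this
    · simpa using Finsupp.notMem_support_iff.1 hγ
  · rintro rfl; exact wn_zero

lemma wn_add_le (hν : ∀ x, 1 ≤ ν x) (p q : MonoidAlgebra ℝ (FreeGroup X)) :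
    weightedNorm ν (p + q) ≤ weightedNorm ν p + weightedNorm ν q := by
  have hsub : (p + q).coeff.support ⊆ p.coeff.support ∪ q.coeff.support := Finsupp.support_add
  rw [wn_eq_sum_subset hsub, wn_eq_sum_subset (Finset.subset_union_left (s₂ := q.coeff.support)),
    wn_eq_sum_subset (Finset.subset_union_right (s₁ := p.coeff.support)), ← Finset.sum_add_distrib]
  refine Finset.sum_le_sum fun γ _ => ?_
  have : |(p + q).coeff γ| ≤ |p.coeff γ| + |q.coeff γ| := by
    rw [MonoidAlgebra.coeff_add, Finsupp.add_apply]; exact abs_add_le _ _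
  calc |(p+q).coeff γ| * freeGroupWeight ν γ ≤ (|p.coeff γ| + |q.coeff γ|) * freeGroupWeight ν γ :=
        mul_le_mul_of_nonneg_right this (fgw_nonneg hν γ)
    _ = |p.coeff γ| * freeGroupWeight ν γ + |q.coeff γ| * freeGroupWeight ν γ := add_mul _ _ _

lemma wn_neg (p : MonoidAlgebra ℝ (FreeGroup X)) : weightedNorm ν (-p) = weightedNorm ν p := by
  unfold weightedNorm
  rw [MonoidAlgebra.coeff_neg, Finsupp.support_neg]
  refine Finset.sum_congr rfl fun γ _ => ?_
  rw [Finsupp.neg_apply, abs_neg]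

lemma wn_single (γ : FreeGroup X) (c : ℝ) :
    weightedNorm ν (MonoidAlgebra.single γ c) = |c| * freeGroupWeight ν γ := by
  rw [wn_eq_sum_subset (p := MonoidAlgebra.single γ c) (s := {γ}) Finsupp.support_single_subset]
  simp [MonoidAlgebra.coeff_single]

lemma wn_sum_le (hν : ∀ x, 1 ≤ ν x) {ι : Type*} (s : Finset ι) (f : ι → MonoidAlgebra ℝ (FreeGroup X)) :
    weightedNorm ν (∑ i ∈ s, f i) ≤ ∑ i ∈ s, weightedNorm ν (f i) := by
  classical
  induction s using Finset.induction_on with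
  | empty => simp [wn_zero]
  | insert _ _ h ih =>
    rw [Finset.sum_insert h, Finset.sum_insert h]
    exact (wn_add_le hν _ _).trans (add_le_add le_rfl ih)

lemma wn_mul_le (hν : ∀ x, 1 ≤ ν x) (p q : MonoidAlgebra ℝ (FreeGroup X)) :
    weightedNorm ν (p * q) ≤ weightedNorm ν p * weightedNorm ν q := by
  rw [MonoidAlgebra.mul_def]
  unfold Finsupp.sum
  calc weightedNorm ν (∑ γ ∈ p.coeff.support, ∑ δ ∈ q.coeff.support,
          MonoidAlgebra.single (γ * δ) (p.coeff γ * q.coeff δ))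
      ≤ ∑ γ ∈ p.coeff.support, weightedNorm ν (∑ δ ∈ q.coeff.support,
          MonoidAlgebra.single (γ * δ) (p.coeff γ * q.coeff δ)) := wn_sum_le hν _ _
    _ ≤ ∑ γ ∈ p.coeff.support, ∑ δ ∈ q.coeff.support,
          weightedNorm ν (MonoidAlgebra.single (γ * δ) (p.coeff γ * q.coeff δ)) :=
        Finset.sum_le_sum fun γ _ => wn_sum_le hν _ _
    _ ≤ ∑ γ ∈ p.coeff.support, ∑ δ ∈ q.coeff.support,
          (|p.coeff γ| * freeGroupWeight ν γ) * (|q.coeff δ| * freeGroupWeight ν δ) := by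
        refine Finset.sum_le_sum fun γ _ => Finset.sum_le_sum fun δ _ => ?_
        rw [wn_single, abs_mul]
        calc |p.coeff γ| * |q.coeff δ| * freeGroupWeight ν (γ * δ)
            ≤ |p.coeff γ| * |q.coeff δ| * (freeGroupWeight ν γ * freeGroupWeight ν δ) :=
              mul_le_mul_of_nonneg_left (fgw_mul_le hν γ δ)
                (mul_nonneg (abs_nonneg _) (abs_nonneg _))
          _ = (|p.coeff γ| * freeGroupWeight ν γ) * (|q.coeff δ| * freeGroupWeight ν δ) := by ring
    _ = weightedNorm ν p * weightedNorm ν q := by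
        rw [weightedNorm, weightedNorm, Finset.sum_mul_sum]

lemma wn_smul (r : ℝ) (p : MonoidAlgebra ℝ (FreeGroup X)) :
    weightedNorm ν (r • p) = |r| * weightedNorm ν p := by
  have hsub : (r • p).coeff.support ⊆ p.coeff.support := Finsupp.support_smul
  rw [wn_eq_sum_subset hsub, weightedNorm, Finset.mul_sum]
  refine Finset.sum_congr rfl fun γ _ => ?_
  rw [MonoidAlgebra.coeff_smul, Finsupp.smul_apply, smul_eq_mul, abs_mul, mul_assoc]

lemma wn_mono {ν₁ ν₂ : X → ℝ} (h1 : ∀ x, 1 ≤ ν₁ x) (hle : ∀ x, ν₁ x ≤ ν₂ x)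
    (p : MonoidAlgebra ℝ (FreeGroup X)) : weightedNorm ν₁ p ≤ weightedNorm ν₂ p :=
  Finset.sum_le_sum fun γ _ =>
    mul_le_mul_of_nonneg_left (fgw_mono h1 hle γ) (abs_nonneg _)

end WN

/-! ### The weighted group algebra as a normed algebra -/

def WA (X : Type) [DecidableEq X] (ν : {ν : X → ℝ // ∀ x, 1 ≤ ν x}) : Type :=
  MonoidAlgebra ℝ (FreeGroup X)

section WAinst

variable (X : Type) [DecidableEq X] (ν : {ν : X → ℝ // ∀ x, 1 ≤ ν x})

noncomputable instance : Ring (WA X ν) := inferInstanceAs (Ring (MonoidAlgebra ℝ (FreeGroup X)))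
noncomputable instance : Algebra ℝ (WA X ν) := inferInstanceAs (Algebra ℝ (MonoidAlgebra ℝ (FreeGroup X)))

noncomputable instance : NormedRing (WA X ν) where
  norm p := weightedNorm ν.1 p
  dist p q := weightedNorm ν.1 (p - q)
  dist_eq p q := by
    show weightedNorm ν.1 (p - q) = weightedNorm ν.1 (-p + q)
    rw [show p - q = -(-p + q) by abel]; exact wn_neg (-p + q)
  dist_self p := by
    show weightedNorm ν.1 (p - p) = 0
    rw [sub_self]; exact wn_zero
  dist_comm p q := by
    show weightedNorm ν.1 (p - q) = weightedNorm ν.1 (q - p)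
    rw [← neg_sub q p]; exact wn_neg (q - p)
  dist_triangle p q r := by
    show weightedNorm ν.1 (p - r) ≤ weightedNorm ν.1 (p - q) + weightedNorm ν.1 (q - r)
    have : p - r = (p - q) + (q - r) := by abel
    rw [this]
    exact wn_add_le ν.2 _ _
  edist_dist _ _ := rfl
  eq_of_dist_eq_zero {p q} h := by
    have : p - q = 0 := (wn_eq_zero ν.2).1 h
    exact sub_eq_zero.1 this
  norm_mul_le p q := wn_mul_le ν.2 p q

lemma WA.norm_def (p : WA X ν) : ‖p‖ = weightedNorm ν.1 p := rfl

noncomputable instance : NormedAlgebra ℝ (WA X ν) :=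
  { (inferInstance : Algebra ℝ (WA X ν)) with
    norm_smul_le := fun r p => le_of_eq (by
      rw [WA.norm_def, WA.norm_def]
      rw [Real.norm_eq_abs]; exact wn_smul r p) }

/-- The identity, as an algebra homomorphism `ℝ[Γ] →ₐ[ℝ] WA X ν`. -/
noncomputable def WA.fromMA : MonoidAlgebra ℝ (FreeGroup X) →ₐ[ℝ] WA X ν :=
  { toFun := id, map_one' := rfl, map_mul' := fun _ _ => rfl,
    map_zero' := rfl, map_add' := fun _ _ => rfl, commutes' := fun _ => rfl }

/-- The identity, as an algebra homomorphism `WA X ν →ₐ[ℝ] ℝ[Γ]`. -/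
noncomputable def WA.toMA : WA X ν →ₐ[ℝ] MonoidAlgebra ℝ (FreeGroup X) :=
  { toFun := id, map_one' := rfl, map_mul' := fun _ _ => rfl,
    map_zero' := rfl, map_add' := fun _ _ => rfl, commutes' := fun _ => rfl }

noncomputable instance : NormedAlgebra ℝ (UniformSpace.Completion (WA X ν)) :=
  { (UniformSpace.Completion.algebra (WA X ν) ℝ) with
    norm_smul_le := fun r x => norm_smul_le r x }

/-- Coercion into the completion, as an algebra homomorphism. -/
noncomputable def WA.coeAlgHom : WA X ν →ₐ[ℝ] UniformSpace.Completion (WA X ν) :=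
  { (UniformSpace.Completion.coeRingHom : WA X ν →+* UniformSpace.Completion (WA X ν)) with
    commutes' := fun r => rfl }

end WAinst

/-! ### Completions and transition maps -/

section Trans
open UniformSpace

variable (X : Type) [DecidableEq X]

/-- The transition map on the group algebras (the identity). -/
noncomputable def tWA (ν₁ ν₂ : {ν : X → ℝ // ∀ x, 1 ≤ ν x}) :
    WA X ν₂ →ₐ[ℝ] WA X ν₁ :=
  { toFun := id, map_one' := rfl, map_mul' := fun _ _ => rfl,
    map_zero' := rfl, map_add' := fun _ _ => rfl, commutes' := fun _ => rfl }

lemma tWA_norm_le {ν₁ ν₂ : {ν : X → ℝ // ∀ x, 1 ≤ ν x}} (h : ν₁.1 ≤ ν₂.1)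
    (p : WA X ν₂) : ‖tWA X ν₁ ν₂ p‖ ≤ ‖p‖ :=
  wn_mono ν₁.2 (fun x => h x) p

lemma tWA_continuous {ν₁ ν₂ : {ν : X → ℝ // ∀ x, 1 ≤ ν x}} (h : ν₁.1 ≤ ν₂.1) :
    Continuous (tWA X ν₁ ν₂) := by
  refine AddMonoidHomClass.continuous_of_bound (tWA X ν₁ ν₂) 1 fun p => ?_
  rw [one_mul]
  exact tWA_norm_le X h p

/-- The transition map between completions. -/
noncomputable def TmapRH {ν₁ ν₂ : {ν : X → ℝ // ∀ x, 1 ≤ ν x}} (h : ν₁.1 ≤ ν₂.1) :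
    Completion (WA X ν₂) →+* Completion (WA X ν₁) :=
  Completion.extensionHom
    ((Completion.coeRingHom (α := WA X ν₁)).comp (tWA X ν₁ ν₂).toRingHom)
    (Completion.continuous_coe _ |>.comp (tWA_continuous X h))

lemma TmapRH_coe {ν₁ ν₂ : {ν : X → ℝ // ∀ x, 1 ≤ ν x}} (h : ν₁.1 ≤ ν₂.1)
    (p : WA X ν₂) : TmapRH X h (↑p : Completion (WA X ν₂)) = ↑(tWA X ν₁ ν₂ p) :=
  Completion.extensionHom_coe _ _ _

noncomputable def Tmap {ν₁ ν₂ : {ν : X → ℝ // ∀ x, 1 ≤ ν x}} (h : ν₁.1 ≤ ν₂.1) :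
    Completion (WA X ν₂) →ₐ[ℝ] Completion (WA X ν₁) :=
  { TmapRH X h with
    commutes' := fun r => by
      show TmapRH X h ((algebraMap ℝ (Completion (WA X ν₂))) r)
        = (algebraMap ℝ (Completion (WA X ν₁))) r
      have h1 : (algebraMap ℝ (Completion (WA X ν₂))) r
          = ((algebraMap ℝ (WA X ν₂) r : WA X ν₂) : Completion (WA X ν₂)) := rfl
      rw [h1, TmapRH_coe X h]
      have h2 : tWA X ν₁ ν₂ (algebraMap ℝ (WA X ν₂) r) = algebraMap ℝ (WA X ν₁) r := by
        rw [AlgHom.commutes]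
      rw [h2]
      rfl }

lemma Tmap_coe {ν₁ ν₂ : {ν : X → ℝ // ∀ x, 1 ≤ ν x}} (h : ν₁.1 ≤ ν₂.1)
    (p : WA X ν₂) : Tmap X h (↑p : Completion (WA X ν₂)) = ↑(tWA X ν₁ ν₂ p) :=
  TmapRH_coe X h p

lemma Tmap_continuous {ν₁ ν₂ : {ν : X → ℝ // ∀ x, 1 ≤ ν x}} (h : ν₁.1 ≤ ν₂.1) :
    Continuous (Tmap X h) :=
  Completion.continuous_extension

lemma Tmap_norm_le {ν₁ ν₂ : {ν : X → ℝ // ∀ x, 1 ≤ ν x}} (h : ν₁.1 ≤ ν₂.1)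
    (x : Completion (WA X ν₂)) : ‖Tmap X h x‖ ≤ ‖x‖ := by
  induction x using Completion.induction_on with
  | hp => exact isClosed_le ((Tmap_continuous X h).norm) continuous_norm
  | ih p =>
    rw [Tmap_coe X h, Completion.norm_coe, Completion.norm_coe]
    exact tWA_norm_le X h p

/-- The canonical algebra homomorphism from the group algebra to the completion. -/
noncomputable def iotaWA (ν : {ν : X → ℝ // ∀ x, 1 ≤ ν x}) :
    MonoidAlgebra ℝ (FreeGroup X) →ₐ[ℝ] Completion (WA X ν) :=
  (WA.coeAlgHom X ν).comp (WA.fromMA X ν)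

lemma iotaWA_apply (ν : {ν : X → ℝ // ∀ x, 1 ≤ ν x}) (p : MonoidAlgebra ℝ (FreeGroup X)) :
    iotaWA X ν p = ((WA.fromMA X ν p : WA X ν) : Completion (WA X ν)) := rfl

end Trans

/-! ### Bounds from a unit representation -/

section Rho

variable {X : Type} [DecidableEq X]

/-- The weight associated to a representation `ρ : Γ →* Aˣ`. -/
noncomputable def rhoNu {A : Type} [NormedRing A] (ρ : FreeGroup X →* Aˣ) :
    {ν : X → ℝ // ∀ x, 1 ≤ ν x} :=
  ⟨fun x => max (max ‖((ρ (FreeGroup.of x) : Aˣ) : A)‖ ‖(((ρ (FreeGroup.of x))⁻¹ : Aˣ) : A)‖) 1,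
   fun x => le_max_right _ _⟩

lemma norm_rho_le {A : Type} [NormedRing A] (ρ : FreeGroup X →* Aˣ) (γ : FreeGroup X) :
    ‖((ρ γ : Aˣ) : A)‖ ≤ max ‖(1:A)‖ 1 * freeGroupWeight (rhoNu (A := A) ρ).1 γ := by
  classical
  set f : X → Aˣ := fun x => ρ (FreeGroup.of x) with hf
  have hρ : ρ = FreeGroup.lift f := FreeGroup.ext_hom _ _ (fun a => by simp [hf])
  have h1 : ρ γ = (γ.toWord.map fun x => cond x.2 (f x.1) (f x.1)⁻¹).prod := by
    calc ρ γ = FreeGroup.lift f (FreeGroup.mk γ.toWord) := by rw [hρ, FreeGroup.mk_toWord]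
      _ = _ := FreeGroup.lift_mk
  have h2 : ((ρ γ : Aˣ) : A)
      = (γ.toWord.map fun x => ((cond x.2 (f x.1) (f x.1)⁻¹ : Aˣ) : A)).prod := by
    rw [h1]
    rw [show ((((γ.toWord.map fun x => cond x.2 (f x.1) (f x.1)⁻¹).prod : Aˣ)) : A)
        = Units.coeHom A (γ.toWord.map fun x => cond x.2 (f x.1) (f x.1)⁻¹).prod from rfl]
    rw [map_list_prod (Units.coeHom A), List.map_map]
    rfl
  rcases eq_or_ne γ.toWord [] with hw | hw
  · rw [h2, hw]
    simp only [List.map_nil, List.prod_nil]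
    have hfgw1 : freeGroupWeight (rhoNu (A := A) ρ).1 γ = 1 := by
      unfold freeGroupWeight; rw [hw]; simp
    rw [hfgw1, mul_one]
    exact le_max_left _ _
  · have hne : (γ.toWord.map fun x => ((cond x.2 (f x.1) (f x.1)⁻¹ : Aˣ) : A)) ≠ [] := by
      simpa using hw
    have h3 := List.norm_prod_le' hne
    rw [h2]
    refine h3.trans ?_
    rw [List.map_map]
    have h4 : (γ.toWord.map
          (norm ∘ fun x => ((cond x.2 (f x.1) (f x.1)⁻¹ : Aˣ) : A))).prod
        ≤ (γ.toWord.map fun p => (rhoNu (A := A) ρ).1 p.1).prod := by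
      apply list_prod_le_prod
      · intro a _; exact norm_nonneg _
      · intro a _
        rcases Bool.eq_false_or_eq_true a.2 with hb | hb <;>
          simp only [Function.comp_apply, hb, cond_true, cond_false, hf]
        · exact le_max_of_le_left (le_max_left _ _)
        · exact le_max_of_le_left (le_max_right _ _)
    refine h4.trans ?_
    have hfgw : (0:ℝ) ≤ freeGroupWeight (rhoNu (A := A) ρ).1 γ :=
      fgw_nonneg (rhoNu (A := A) ρ).2 γ
    exact le_mul_of_one_le_left hfgw (le_max_right _ _)

lemma norm_lift_le {A : Type} [NormedRing A] [NormedAlgebra ℝ A] (ρ : FreeGroup X →* Aˣ)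
    (p : MonoidAlgebra ℝ (FreeGroup X)) :
    ‖MonoidAlgebra.lift ℝ A (FreeGroup X) ((Units.coeHom A).comp ρ) p‖
      ≤ max ‖(1:A)‖ 1 * weightedNorm (rhoNu (A := A) ρ).1 p := by
  rw [MonoidAlgebra.lift_apply]
  unfold Finsupp.sum
  calc ‖∑ γ ∈ p.coeff.support, p.coeff γ • (((Units.coeHom A).comp ρ) γ : A)‖
      ≤ ∑ γ ∈ p.coeff.support, ‖p.coeff γ • (((Units.coeHom A).comp ρ) γ : A)‖ := norm_sum_le _ _
    _ ≤ ∑ γ ∈ p.coeff.support, |p.coeff γ| * (max ‖(1:A)‖ 1 * freeGroupWeight (rhoNu (A := A) ρ).1 γ) := by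
        refine Finset.sum_le_sum fun γ _ => ?_
        rw [norm_smul, Real.norm_eq_abs]
        exact mul_le_mul_of_nonneg_left (norm_rho_le ρ γ) (abs_nonneg _)
    _ = max ‖(1:A)‖ 1 * weightedNorm (rhoNu (A := A) ρ).1 p := by
        rw [weightedNorm, Finset.mul_sum]
        exact Finset.sum_congr rfl fun γ _ => by ring

end Rho

open UniformSpace

/-- Let `Γ = FreeGroup X`.  For `ν : X → [1,∞)`, the weighted `ℓ¹`-norm `‖·‖_{1,ν}` is a
(submultiplicative) algebra norm on `ℝ[Γ]`, and there is an inverse system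
`{ℝ[Γ]^∧ν}_ν` of unital real Banach algebras over the directed set `[1,∞)^X`
(pointwise order), where `ℝ[Γ]^∧ν` is the completion of `ℝ[Γ]` with respect to
`‖·‖_{1,ν}` (i.e. it receives `ℝ[Γ]` isometrically with dense image) with
norm-decreasing transition maps, such that for every unital real Banach algebra `A`
the canonical map `colim_ν Hom_{BanAlg}(ℝ[Γ]^∧ν, A) → Hom_Grp(Γ, Aˣ)`,
`f ↦ (γ ↦ f(γ))`, is a bijection — i.e. every group homomorphism `Γ → Aˣ` comes from
some `ℝ[Γ]^∧ν`, and two morphisms inducing the same group homomorphism are identified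
in the colimit.  (Naturality in `A` holds by construction, the map being given by
composition with the canonical morphisms.)  In other words, the functor
`A ↦ Hom_Grp(F(X), Aˣ)` is pro-representable by the inverse system `{ℝ[Γ]^∧ν}_ν`. -/
theorem freeGroup_banach_proRepresentable (X : Type) [DecidableEq X] :
    (∀ ν : X → ℝ, (∀ x, 1 ≤ ν x) →
      (∀ p, 0 ≤ weightedNorm ν p) ∧
      (∀ p, weightedNorm ν p = 0 ↔ p = 0) ∧
      (∀ p q, weightedNorm ν (p + q) ≤ weightedNorm ν p + weightedNorm ν q) ∧
      (∀ p q : MonoidAlgebra ℝ (FreeGroup X),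
        weightedNorm ν (p * q) ≤ weightedNorm ν p * weightedNorm ν q)) ∧
    ∃ (R : {ν : X → ℝ // ∀ x, 1 ≤ ν x} → BanAlg)
      (ι : ∀ ν, MonoidAlgebra ℝ (FreeGroup X) →ₐ[ℝ] (R ν : Type))
      (T : ∀ ν₁ ν₂ : {ν : X → ℝ // ∀ x, 1 ≤ ν x},
        ν₁.1 ≤ ν₂.1 → ((R ν₂ : Type) →ₐ[ℝ] (R ν₁ : Type))),
      (∀ ν, DenseRange (ι ν) ∧ ∀ p, ‖ι ν p‖ = weightedNorm ν.1 p) ∧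
      (∀ ν₁ ν₂ (h : ν₁.1 ≤ ν₂.1),
        Continuous (T ν₁ ν₂ h) ∧ (∀ x, ‖T ν₁ ν₂ h x‖ ≤ ‖x‖) ∧
        ∀ p, T ν₁ ν₂ h (ι ν₂ p) = ι ν₁ p) ∧
      (∀ (A : BanAlg) (ρ : FreeGroup X →* (A : Type)ˣ),
        ∃ (ν : {ν : X → ℝ // ∀ x, 1 ≤ ν x}) (f : (R ν : Type) →ₐ[ℝ] (A : Type)), Continuous f ∧
          ∀ γ : FreeGroup X,
            f (ι ν (MonoidAlgebra.of ℝ (FreeGroup X) γ)) = ((ρ γ : (A : Type)ˣ) : A)) ∧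
      (∀ (A : BanAlg) (ν₁ ν₂ : {ν : X → ℝ // ∀ x, 1 ≤ ν x})
        (f₁ : (R ν₁ : Type) →ₐ[ℝ] (A : Type)) (f₂ : (R ν₂ : Type) →ₐ[ℝ] (A : Type)),
        Continuous f₁ → Continuous f₂ →
        (∀ γ : FreeGroup X, f₁ (ι ν₁ (MonoidAlgebra.of ℝ (FreeGroup X) γ)) =
          f₂ (ι ν₂ (MonoidAlgebra.of ℝ (FreeGroup X) γ))) →
        ∃ (ν₃ : {ν : X → ℝ // ∀ x, 1 ≤ ν x}) (h₁ : ν₁.1 ≤ ν₃.1) (h₂ : ν₂.1 ≤ ν₃.1),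
          f₁.comp (T ν₁ ν₃ h₁) = f₂.comp (T ν₂ ν₃ h₂)) := by
  constructor
  · intro ν hν
    exact ⟨wn_nonneg hν, fun p => wn_eq_zero hν, wn_add_le hν, wn_mul_le hν⟩
  refine ⟨fun ν => ⟨Completion (WA X ν)⟩, fun ν => iotaWA X ν, fun ν₁ ν₂ h => Tmap X h,
    ?_, ?_, ?_, ?_⟩
  · -- isometry and density
    intro ν
    constructor
    · exact Completion.denseRange_coe (α := WA X ν)
    · intro p
      show ‖((WA.fromMA X ν p : WA X ν) : Completion (WA X ν))‖ = weightedNorm ν.1 p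
      rw [Completion.norm_coe]
      rfl
  · -- transition maps
    intro ν₁ ν₂ h
    refine ⟨Tmap_continuous X h, Tmap_norm_le X h, fun p => ?_⟩
    show Tmap X h ((WA.fromMA X ν₂ p : WA X ν₂) : Completion (WA X ν₂)) = iotaWA X ν₁ p
    rw [Tmap_coe X h]
    rfl
  · -- existence
    intro A ρ
    set ν : {ν : X → ℝ // ∀ x, 1 ≤ ν x} := rhoNu (A := (A : Type)) ρ with hν
    set f₀ : MonoidAlgebra ℝ (FreeGroup X) →ₐ[ℝ] (A : Type) :=
      MonoidAlgebra.lift ℝ (A : Type) (FreeGroup X) ((Units.coeHom (A : Type)).comp ρ) with hf₀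
    have hcont : Continuous ((f₀.comp (WA.toMA X ν) : WA X ν →ₐ[ℝ] (A : Type))) := by
      refine AddMonoidHomClass.continuous_of_bound _ (max ‖(1:(A : Type))‖ 1) fun p => ?_
      exact norm_lift_le ρ p
    refine ⟨ν, { Completion.extensionHom (f₀.comp (WA.toMA X ν)).toRingHom hcont with
        commutes' := fun r => ?_ }, ?_, ?_⟩
    · show Completion.extensionHom (f₀.comp (WA.toMA X ν)).toRingHom hcont
        ((algebraMap ℝ (Completion (WA X ν))) r) = algebraMap ℝ (A : Type) r
      have h1 : (algebraMap ℝ (Completion (WA X ν))) r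
          = ((algebraMap ℝ (WA X ν) r : WA X ν) : Completion (WA X ν)) := rfl
      rw [h1, Completion.extensionHom_coe]
      exact (f₀.comp (WA.toMA X ν)).commutes r
    · exact Completion.continuous_extension
    · intro γ
      show Completion.extensionHom (f₀.comp (WA.toMA X ν)).toRingHom hcont
        ((WA.fromMA X ν (MonoidAlgebra.of ℝ (FreeGroup X) γ) : WA X ν)
          : Completion (WA X ν)) = _
      rw [Completion.extensionHom_coe]
      show f₀ (MonoidAlgebra.of ℝ (FreeGroup X) γ) = _
      rw [hf₀, MonoidAlgebra.lift_of]
      rfl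
  · -- uniqueness in the colimit
    intro A ν₁ ν₂ f₁ f₂ hc₁ hc₂ hgam
    set ν₃ : {ν : X → ℝ // ∀ x, 1 ≤ ν x} := ⟨fun x => max (ν₁.1 x) (ν₂.1 x),
        fun x => (ν₁.2 x).trans (le_max_left _ _)⟩ with hν₃
    have h₁ : ν₁.1 ≤ ν₃.1 := fun x => le_max_left _ _
    have h₂ : ν₂.1 ≤ ν₃.1 := fun x => le_max_right _ _
    refine ⟨ν₃, h₁, h₂, ?_⟩
    have key : f₁.comp (iotaWA X ν₁) = f₂.comp (iotaWA X ν₂) := by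
      refine MonoidAlgebra.algHom_ext ?_ (Subsingleton.elim _ _)
      intro γ
      have := hgam γ
      simpa [MonoidAlgebra.of_apply] using this
    apply DFunLike.coe_injective
    refine (Completion.denseRange_coe (α := WA X ν₃)).equalizer
      (hc₁.comp (Tmap_continuous X h₁)) (hc₂.comp (Tmap_continuous X h₂)) ?_
    funext p
    show f₁ (Tmap X h₁ ((p : WA X ν₃) : Completion (WA X ν₃)))
      = f₂ (Tmap X h₂ ((p : WA X ν₃) : Completion (WA X ν₃)))
    rw [Tmap_coe, Tmap_coe]
    exact DFunLike.congr_fun key (p : MonoidAlgebra ℝ (FreeGroup X))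
end

section
/- Let Γ be a finitely generated group. Then the functor A ↦ Hom_Grp(Γ, Aˣ) on the category of unital real Banach algebras (morphisms: continuous unital algebra homomorphisms) is pro-representable by a countable inverse system: there exists an inverse sequence R₁ ← R₂ ← R₃ ← ⋯ of unital real Banach algebras with continuous unital algebra homomorphisms as transition maps, together with bijections Hom_Grp(Γ, Aˣ) ≅ colim_{n∈ℕ} Hom_{BanAlg_ℝ}(R_n, A), natural in the unital real Banach algebra A. -/
noncomputable section BanachProRep
namespace BanachProRep

open UniformSpace Finsupp

variable {Γ : Type} [Group Γ]

/-- A bundled submultiplicative weight on a group. -/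
structure Weight (Γ : Type) [Group Γ] : Type where
  c : Γ → ℝ
  one_le : ∀ γ, 1 ≤ c γ
  map_one : c 1 = 1
  mul_le : ∀ γ δ, c (γ * δ) ≤ c γ * c δ

/-- Type synonym for the group algebra `ℝ[Γ]` equipped with the weighted `ℓ¹` norm. -/
def WAlg (Γ : Type) [Group Γ] (_κ : Weight Γ) : Type := MonoidAlgebra ℝ Γ

variable {κ : Weight Γ}

/-- Identity on the underlying group algebra, into the weighted copy. -/
def toW (κ : Weight Γ) (f : MonoidAlgebra ℝ Γ) : WAlg Γ κ := f

/-- The weighted ℓ¹ norm. -/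
def wnorm (κ : Weight Γ) (f : MonoidAlgebra ℝ Γ) : ℝ := ∑ γ ∈ f.coeff.support, |f.coeff γ| * κ.c γ

lemma wnorm_eq_sum (κ : Weight Γ) (f : MonoidAlgebra ℝ Γ) {s : Finset Γ} (h : f.coeff.support ⊆ s) :
    wnorm κ f = ∑ γ ∈ s, |f.coeff γ| * κ.c γ := by
  refine Finset.sum_subset h fun γ _ hγ => ?_
  rw [Finsupp.notMem_support_iff.mp hγ, abs_zero, zero_mul]

lemma wnorm_nonneg (κ : Weight Γ) (f : MonoidAlgebra ℝ Γ) : 0 ≤ wnorm κ f :=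
  Finset.sum_nonneg fun γ _ => mul_nonneg (abs_nonneg _)
    ((zero_le_one.trans (κ.one_le γ)))

lemma wnorm_zero (κ : Weight Γ) : wnorm κ 0 = 0 := by simp [wnorm]

lemma wnorm_neg (κ : Weight Γ) (f : MonoidAlgebra ℝ Γ) : wnorm κ (-f) = wnorm κ f := by
  rw [wnorm_eq_sum κ (-f) (Finsupp.support_neg f.coeff).le, wnorm]
  refine Finset.sum_congr rfl fun γ _ => ?_
  rw [MonoidAlgebra.coeff_neg, Finsupp.neg_apply, abs_neg]

lemma wnorm_add_le (κ : Weight Γ) (f g : MonoidAlgebra ℝ Γ) :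
    wnorm κ (f + g) ≤ wnorm κ f + wnorm κ g := by
  classical
  rw [wnorm_eq_sum κ (f+g) (Finsupp.support_add (g₁ := f.coeff) (g₂ := g.coeff)),
    wnorm_eq_sum κ f (Finset.subset_union_left (s₂ := g.coeff.support)),
    wnorm_eq_sum κ g (Finset.subset_union_right (s₁ := f.coeff.support)), ← Finset.sum_add_distrib]
  refine Finset.sum_le_sum fun γ _ => ?_
  rw [← add_mul]
  exact mul_le_mul_of_nonneg_right (by simpa using abs_add_le (f.coeff γ) (g.coeff γ))
    (zero_le_one.trans (κ.one_le γ))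

lemma wnorm_eq_zero (κ : Weight Γ) {f : MonoidAlgebra ℝ Γ} (h : wnorm κ f = 0) : f = 0 := by
  ext γ
  by_contra hγ
  have hmem : γ ∈ f.coeff.support := Finsupp.mem_support_iff.mpr hγ
  have := (Finset.sum_eq_zero_iff_of_nonneg fun γ _ => mul_nonneg (abs_nonneg _)
    (zero_le_one.trans (κ.one_le γ))).mp h γ hmem
  have hc : 0 < κ.c γ := lt_of_lt_of_le zero_lt_one (κ.one_le γ)
  have : |f.coeff γ| = 0 := by
    rcases mul_eq_zero.mp this with h' | h'
    · exact h'
    · exact absurd h' (ne_of_gt hc)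
  exact hγ (abs_eq_zero.mp this)

lemma wnorm_single (κ : Weight Γ) (γ : Γ) (a : ℝ) :
    wnorm κ (MonoidAlgebra.single γ a) = |a| * κ.c γ := by
  rw [wnorm_eq_sum κ (MonoidAlgebra.single γ a) Finsupp.support_single_subset, Finset.sum_singleton,
    MonoidAlgebra.coeff_single, Finsupp.single_eq_same]

lemma wnorm_sum_le (κ : Weight Γ) {ι : Type*} (s : Finset ι) (h : ι → MonoidAlgebra ℝ Γ) :
    wnorm κ (∑ i ∈ s, h i) ≤ ∑ i ∈ s, wnorm κ (h i) := by
  classical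
  induction s using Finset.induction_on with
  | empty => simp [wnorm_zero]
  | insert _ _ hx ih =>
    rw [Finset.sum_insert hx, Finset.sum_insert hx]
    exact (wnorm_add_le κ _ _).trans (by linarith)

lemma wnorm_mul_le (κ : Weight Γ) (f g : MonoidAlgebra ℝ Γ) :
    wnorm κ (f * g) ≤ wnorm κ f * wnorm κ g := by
  rw [MonoidAlgebra.mul_def]
  unfold Finsupp.sum
  refine le_trans (wnorm_sum_le κ _ _) ?_
  rw [wnorm, wnorm, Finset.sum_mul_sum]
  refine Finset.sum_le_sum fun a _ => ?_
  refine le_trans (wnorm_sum_le κ _ _) ?_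
  refine Finset.sum_le_sum fun b _ => ?_
  rw [wnorm_single, abs_mul]
  calc |f.coeff a| * |g.coeff b| * κ.c (a * b) ≤ |f.coeff a| * |g.coeff b| * (κ.c a * κ.c b) := by
        exact mul_le_mul_of_nonneg_left (κ.mul_le a b) (mul_nonneg (abs_nonneg _) (abs_nonneg _))
    _ = |f.coeff a| * κ.c a * (|g.coeff b| * κ.c b) := by ring

lemma wnorm_smul (κ : Weight Γ) (r : ℝ) (f : MonoidAlgebra ℝ Γ) :
    wnorm κ (r • f) = |r| * wnorm κ f := by
  rw [wnorm_eq_sum κ (r • f) (Finsupp.support_smul (b := r) (g := f.coeff)), wnorm, Finset.mul_sum]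
  refine Finset.sum_congr rfl fun γ _ => ?_
  rw [MonoidAlgebra.coeff_smul, Finsupp.smul_apply, smul_eq_mul, abs_mul, mul_assoc]

lemma wnorm_one (κ : Weight Γ) : wnorm κ (1 : MonoidAlgebra ℝ Γ) = 1 := by
  rw [MonoidAlgebra.one_def, wnorm_single, κ.map_one, abs_one, one_mul]

/-- The weighted norm as a normed-group structure (not an instance). -/
def wNACG (κ : Weight Γ) : NormedAddCommGroup (WAlg Γ κ) :=
  letI : AddCommGroup (WAlg Γ κ) := inferInstanceAs (AddCommGroup (MonoidAlgebra ℝ Γ))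
  AddGroupNorm.toNormedAddCommGroup
    { toFun := fun f => wnorm κ f
      map_zero' := wnorm_zero κ
      add_le' := wnorm_add_le κ
      neg' := wnorm_neg κ
      eq_zero_of_map_eq_zero' := fun f h => wnorm_eq_zero κ h }

instance : NormedRing (WAlg Γ κ) :=
  { wNACG κ, (inferInstance : Ring (MonoidAlgebra ℝ Γ)) with
    norm_mul_le := fun f g => wnorm_mul_le κ f g }

lemma wnorm_def (f : WAlg Γ κ) : ‖f‖ = wnorm κ f := rfl

instance : NormedAlgebra ℝ (WAlg Γ κ) :=
  { (inferInstance : Algebra ℝ (MonoidAlgebra ℝ Γ)) with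
    norm_smul_le := fun r f => le_of_eq (by
      rw [wnorm_def]; exact wnorm_smul κ r f) }


instance : NormedAlgebra ℝ (Completion (WAlg Γ κ)) where
  norm_smul_le := norm_smul_le

section Ext

variable {W B : Type} [NormedRing W] [NormedAlgebra ℝ W]
  [NormedRing B] [NormedAlgebra ℝ B] [CompleteSpace B]

/-- Coercion into the completion, as an algebra homomorphism. -/
def coeAlg (W : Type) [NormedRing W] [NormedAlgebra ℝ W] : W →ₐ[ℝ] Completion W :=
  { Completion.coeRingHom with
    commutes' := fun _ => rfl }

lemma coeAlg_apply (a : W) : coeAlg W a = (a : Completion W) := rfl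

lemma coeAlg_continuous : Continuous (coeAlg W) := Completion.continuous_coe W

/-- Extension of a continuous algebra homomorphism to the completion. -/
def extendAlgHom (f : W →ₐ[ℝ] B) (hf : Continuous f) : Completion W →ₐ[ℝ] B :=
  { Completion.extensionHom (f : W →+* B) hf with
    commutes' := fun r => by
      have h1 : (algebraMap ℝ (Completion W) r) = ((algebraMap ℝ W r : W) : Completion W) :=
        Completion.algebraMap_def W ℝ r
      show Completion.extensionHom (f : W →+* B) hf (algebraMap ℝ (Completion W) r) = _
      rw [h1]
      exact (Completion.extensionHom_coe (f : W →+* B) hf _).trans (f.commutes r) }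

lemma extendAlgHom_coe (f : W →ₐ[ℝ] B) (hf : Continuous f) (a : W) :
    extendAlgHom f hf (a : Completion W) = f a :=
  Completion.extensionHom_coe (f : W →+* B) hf a

lemma extendAlgHom_continuous (f : W →ₐ[ℝ] B) (hf : Continuous f) :
    Continuous (extendAlgHom f hf) :=
  Completion.continuous_extension

end Ext

section Res

variable (κ κ' : Weight Γ)

/-- The identity of `ℝ[Γ]`, from a bigger weight to a smaller one. -/
def resW (κ κ' : Weight Γ) : WAlg Γ κ' →ₐ[ℝ] WAlg Γ κ where
  toFun f := f
  map_one' := rfl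
  map_mul' _ _ := rfl
  map_zero' := rfl
  map_add' _ _ := rfl
  commutes' _ := rfl

lemma resW_norm_le {κ κ' : Weight Γ} (h : ∀ γ, κ.c γ ≤ κ'.c γ) (f : WAlg Γ κ') :
    ‖resW κ κ' f‖ ≤ ‖f‖ := by
  rw [wnorm_def, wnorm_def]
  exact Finset.sum_le_sum fun γ _ =>
    mul_le_mul_of_nonneg_left (h γ) (abs_nonneg _)

lemma resW_continuous {κ κ' : Weight Γ} (h : ∀ γ, κ.c γ ≤ κ'.c γ) : Continuous (resW κ κ') :=
  AddMonoidHomClass.continuous_of_bound (resW κ κ') 1 fun f => by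
    rw [one_mul]; exact resW_norm_le h f

/-- The transition homomorphism between completions. -/
def transW {κ κ' : Weight Γ} (h : ∀ γ, κ.c γ ≤ κ'.c γ) :
    Completion (WAlg Γ κ') →ₐ[ℝ] Completion (WAlg Γ κ) :=
  extendAlgHom ((coeAlg (WAlg Γ κ)).comp (resW κ κ'))
    ((Completion.continuous_coe (WAlg Γ κ)).comp (resW_continuous h))

lemma transW_coe {κ κ' : Weight Γ} (h : ∀ γ, κ.c γ ≤ κ'.c γ) (a : WAlg Γ κ') :
    transW h (a : Completion (WAlg Γ κ')) = ((resW κ κ' a : WAlg Γ κ) : Completion (WAlg Γ κ)) :=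
  extendAlgHom_coe _ _ a

lemma transW_continuous {κ κ' : Weight Γ} (h : ∀ γ, κ.c γ ≤ κ'.c γ) : Continuous (transW h) :=
  extendAlgHom_continuous _ _

end Res

/-- `Γ →* Completion ℝ[Γ]` sending `γ` to the corresponding group-like element. -/
def grpAux (κ : Weight Γ) : Γ →* Completion (WAlg Γ κ) where
  toFun γ := (toW κ (MonoidAlgebra.of ℝ Γ γ) : Completion (WAlg Γ κ))
  map_one' := by
    show (toW κ (MonoidAlgebra.of ℝ Γ 1) : Completion (WAlg Γ κ)) = 1
    rw [show toW κ (MonoidAlgebra.of ℝ Γ 1) = (1 : WAlg Γ κ) from congrArg (toW κ) (map_one _)]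
    exact Completion.coe_one _
  map_mul' γ δ := by
    show (toW κ (MonoidAlgebra.of ℝ Γ (γ * δ)) : Completion (WAlg Γ κ)) = _
    rw [show toW κ (MonoidAlgebra.of ℝ Γ (γ * δ))
        = toW κ (MonoidAlgebra.of ℝ Γ γ) * toW κ (MonoidAlgebra.of ℝ Γ δ)
        from congrArg (toW κ) (map_mul (MonoidAlgebra.of ℝ Γ) γ δ)]
    exact Completion.coe_mul _ _

/-- The canonical group homomorphism `Γ →* (Completion ℝ[Γ])ˣ`. -/
def grpU (κ : Weight Γ) : Γ →* (Completion (WAlg Γ κ))ˣ :=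
  MonoidHom.toHomUnits (grpAux κ)

lemma grpU_val (κ : Weight Γ) (γ : Γ) :
    ((grpU κ γ : (Completion (WAlg Γ κ))ˣ) : Completion (WAlg Γ κ)) =
      (toW κ (MonoidAlgebra.of ℝ Γ γ) : Completion (WAlg Γ κ)) := rfl


/-- Algebra hom versions of the identity between `ℝ[Γ]` and its weighted copy. -/
def toWA (κ : Weight Γ) : MonoidAlgebra ℝ Γ →ₐ[ℝ] WAlg Γ κ where
  toFun := toW κ
  map_one' := rfl
  map_mul' _ _ := rfl
  map_zero' := rfl
  map_add' _ _ := rfl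
  commutes' _ := rfl

def ofWA (κ : Weight Γ) : WAlg Γ κ →ₐ[ℝ] MonoidAlgebra ℝ Γ where
  toFun f := f
  map_one' := rfl
  map_mul' _ _ := rfl
  map_zero' := rfl
  map_add' _ _ := rfl
  commutes' _ := rfl

section Word

variable (TS : Set Γ)

/-- Possible lengths of words in `TS` representing `γ`. -/
def wordSet (γ : Γ) : Set ℕ :=
  {k | ∃ l : List Γ, (∀ x ∈ l, x ∈ TS) ∧ l.prod = γ ∧ l.length = k}

/-- Minimal word length. -/
def wordLen (γ : Γ) : ℕ := sInf (wordSet TS γ)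

variable {TS}

lemma wordSet_nonempty (hgen : ∀ δ : Γ, ∃ l : List Γ, (∀ x ∈ l, x ∈ TS) ∧ l.prod = δ)
    (γ : Γ) : (wordSet TS γ).Nonempty := by
  obtain ⟨l, h1, h2⟩ := hgen γ
  exact ⟨l.length, l, h1, h2, rfl⟩

lemma wordLen_le {γ : Γ} (l : List Γ) (h1 : ∀ x ∈ l, x ∈ TS) (h2 : l.prod = γ) :
    wordLen TS γ ≤ l.length := Nat.sInf_le ⟨l, h1, h2, rfl⟩

lemma exists_word (hgen : ∀ δ : Γ, ∃ l : List Γ, (∀ x ∈ l, x ∈ TS) ∧ l.prod = δ) (γ : Γ) :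
    ∃ l : List Γ, (∀ x ∈ l, x ∈ TS) ∧ l.prod = γ ∧ l.length = wordLen TS γ :=
  Nat.sInf_mem (wordSet_nonempty hgen γ)

lemma wordLen_one : wordLen TS 1 = 0 :=
  Nat.le_zero.mp (wordLen_le [] (by simp) rfl)

lemma wordLen_mul_le (hgen : ∀ δ : Γ, ∃ l : List Γ, (∀ x ∈ l, x ∈ TS) ∧ l.prod = δ)
    (γ δ : Γ) : wordLen TS (γ * δ) ≤ wordLen TS γ + wordLen TS δ := by
  obtain ⟨l1, h11, h12, h13⟩ := exists_word hgen γ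
  obtain ⟨l2, h21, h22, h23⟩ := exists_word hgen δ
  have := wordLen_le (l1 ++ l2) (fun x hx => by
    rcases List.mem_append.mp hx with h | h
    exacts [h11 x h, h21 x h]) (by rw [List.prod_append, h12, h22])
  rwa [List.length_append, h13, h23] at this

/-- The weight `γ ↦ (n+1) ^ wordLen γ`. -/
def weightOf (hgen : ∀ δ : Γ, ∃ l : List Γ, (∀ x ∈ l, x ∈ TS) ∧ l.prod = δ) (n : ℕ) :
    Weight Γ where
  c γ := ((n : ℝ) + 1) ^ wordLen TS γ
  one_le γ := one_le_pow₀ (by linarith [Nat.cast_nonneg (α := ℝ) n])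
  map_one := by
    show ((n : ℝ) + 1) ^ wordLen TS 1 = 1
    rw [wordLen_one, pow_zero]
  mul_le γ δ := by
    show ((n : ℝ) + 1) ^ wordLen TS (γ * δ) ≤ _
    rw [← pow_add]
    exact pow_le_pow_right₀ (by linarith [Nat.cast_nonneg (α := ℝ) n])
      (wordLen_mul_le hgen γ δ)

lemma weightOf_c (hgen : ∀ δ : Γ, ∃ l : List Γ, (∀ x ∈ l, x ∈ TS) ∧ l.prod = δ) (n : ℕ)
    (γ : Γ) : (weightOf hgen n).c γ = ((n : ℝ) + 1) ^ wordLen TS γ := rfl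

lemma weightOf_mono (hgen : ∀ δ : Γ, ∃ l : List Γ, (∀ x ∈ l, x ∈ TS) ∧ l.prod = δ)
    {m n : ℕ} (h : m ≤ n) (γ : Γ) : (weightOf hgen m).c γ ≤ (weightOf hgen n).c γ := by
  rw [weightOf_c, weightOf_c]
  refine pow_le_pow_left₀ (by positivity) ?_ _
  have : (m : ℝ) ≤ (n : ℝ) := Nat.cast_le.mpr h
  linarith

end Word

section Lift

variable {A : Type} [NormedRing A] [NormedAlgebra ℝ A]

lemma norm_lift_le (κ : Weight Γ) (ρ : Γ →* Aˣ) {K : ℝ}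
    (hρ : ∀ γ, ‖((ρ γ : Aˣ) : A)‖ ≤ K * κ.c γ) (f : MonoidAlgebra ℝ Γ) :
    ‖MonoidAlgebra.lift ℝ A Γ ((Units.coeHom A).comp ρ) f‖ ≤ K * wnorm κ f := by
  rw [MonoidAlgebra.lift_apply]
  refine le_trans (norm_sum_le _ _) ?_
  rw [wnorm, Finset.mul_sum]
  refine Finset.sum_le_sum fun γ _ => ?_
  rw [norm_smul, Real.norm_eq_abs]
  calc |f.coeff γ| * ‖((ρ γ : Aˣ) : A)‖ ≤ |f.coeff γ| * (K * κ.c γ) :=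
        mul_le_mul_of_nonneg_left (hρ γ) (abs_nonneg _)
    _ = K * (|f.coeff γ| * κ.c γ) := by ring

lemma norm_rho_word_le {TS : Set Γ} (ρ : Γ →* Aˣ) (n : ℕ)
    (hT : ∀ x ∈ TS, ‖((ρ x : Aˣ) : A)‖ ≤ (n : ℝ) + 1)
    (l : List Γ) (hl : ∀ x ∈ l, x ∈ TS) :
    ‖((ρ l.prod : Aˣ) : A)‖ ≤ max ‖(1 : A)‖ 1 * ((n : ℝ) + 1) ^ l.length := by
  induction l with
  | nil =>
    simp only [List.prod_nil, map_one, Units.val_one, List.length_nil, pow_zero, mul_one]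
    exact le_max_left _ _
  | cons x l ih =>
    have hx : ‖((ρ x : Aˣ) : A)‖ ≤ (n : ℝ) + 1 := hT x (hl x List.mem_cons_self)
    have hrest := ih fun y hy => hl y (List.mem_cons_of_mem x hy)
    rw [List.prod_cons, map_mul, Units.val_mul]
    calc ‖((ρ x : Aˣ) : A) * ((ρ l.prod : Aˣ) : A)‖
        ≤ ‖((ρ x : Aˣ) : A)‖ * ‖((ρ l.prod : Aˣ) : A)‖ := norm_mul_le _ _
      _ ≤ ((n : ℝ) + 1) * (max ‖(1 : A)‖ 1 * ((n : ℝ) + 1) ^ l.length) := by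
          refine mul_le_mul hx hrest (norm_nonneg _) (by positivity)
      _ = max ‖(1 : A)‖ 1 * ((n : ℝ) + 1) ^ (x :: l).length := by
          rw [List.length_cons, pow_succ]; ring

end Lift

end BanachProRep

set_option maxHeartbeats 2000000 in
set_option synthInstance.maxHeartbeats 400000 in
/-- Let `Γ` be a finitely generated group.  Then the functor `A ↦ Hom_Grp(Γ, Aˣ)` on
unital real Banach algebras is pro-representable by a countable inverse system: there
are an inverse sequence `R₀ ← R₁ ← R₂ ← ⋯` of unital real Banach algebras (with
continuous unital algebra homomorphisms `T m n : R n → R m` for `m ≤ n`, compatible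
with the one-step transition maps and with `T n n = id`) and, for every unital real
Banach algebra `A`, canonical maps `c A n : Hom_{BanAlg}(R n, A) → Hom_Grp(Γ, Aˣ)`
that are compatible with the transition maps and natural in `A`, and which exhibit
`Hom_Grp(Γ, Aˣ)` as the colimit of the sequence `Hom_{BanAlg}(R n, A)`: the maps
`c A n` are jointly surjective, and two elements with the same image are identified
after composing with some transition map. -/
theorem finitelyGeneratedGroup_banach_proRepresentable
    (Γ : Type) [Group Γ] (hΓ : Group.FG Γ) :
    ∃ (R : ℕ → BanAlg)
      (T : ∀ m n : ℕ, m ≤ n → {g : (R n : Type) →ₐ[ℝ] (R m : Type) // Continuous g})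
      (c : ∀ (A : BanAlg) (n : ℕ),
        {f : (R n : Type) →ₐ[ℝ] (A : Type) // Continuous f} → (Γ →* (A : Type)ˣ)),
      -- `T` is a transitive system of transition maps
      (∀ n : ℕ, (T n n le_rfl).1 = AlgHom.id ℝ (R n : Type)) ∧
      (∀ (l m n : ℕ) (hlm : l ≤ m) (hmn : m ≤ n),
        (T l n (hlm.trans hmn)).1 = ((T l m hlm).1).comp (T m n hmn).1) ∧
      -- the maps `c` are compatible with the transition maps
      (∀ (A : BanAlg) (m n : ℕ) (h : m ≤ n)
        (f : {f : (R m : Type) →ₐ[ℝ] (A : Type) // Continuous f}),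
        c A n ⟨f.1.comp (T m n h).1, f.2.comp (T m n h).2⟩ = c A m f) ∧
      -- naturality in `A`
      (∀ (A B : BanAlg) (φ : {g : (A : Type) →ₐ[ℝ] (B : Type) // Continuous g})
        (n : ℕ) (f : {f : (R n : Type) →ₐ[ℝ] (A : Type) // Continuous f}),
        c B n ⟨φ.1.comp f.1, φ.2.comp f.2⟩ =
          (Units.map (φ.1 : (A : Type) →* (B : Type))).comp (c A n f)) ∧
      -- the induced map `colim_n Hom(R n, A) → Hom_Grp(Γ, Aˣ)` is surjective …
      (∀ (A : BanAlg) (ρ : Γ →* (A : Type)ˣ),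
        ∃ (n : ℕ) (f : {f : (R n : Type) →ₐ[ℝ] (A : Type) // Continuous f}),
          c A n f = ρ) ∧
      -- … and injective
      (∀ (A : BanAlg) (m n : ℕ)
        (f : {f : (R m : Type) →ₐ[ℝ] (A : Type) // Continuous f})
        (g : {g : (R n : Type) →ₐ[ℝ] (A : Type) // Continuous g}),
        c A m f = c A n g →
        ∃ (N : ℕ) (hm : m ≤ N) (hn : n ≤ N),
          f.1.comp (T m N hm).1 = g.1.comp (T n N hn).1) := by
  classical
  obtain ⟨S, hS⟩ := (Group.fg_iff_monoid_fg.mp hΓ).fg_top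
  have hgen : ∀ δ : Γ, ∃ l : List Γ, (∀ x ∈ l, x ∈ (↑S : Set Γ)) ∧ l.prod = δ := fun δ =>
    Submonoid.exists_list_of_mem_closure (by rw [hS]; trivial)
  let κ : ℕ → BanachProRep.Weight Γ := fun n => BanachProRep.weightOf hgen n
  have hmono : ∀ {m n : ℕ}, m ≤ n → ∀ γ, (κ m).c γ ≤ (κ n).c γ := fun h γ =>
    BanachProRep.weightOf_mono hgen h γ
  refine ⟨fun n => ⟨UniformSpace.Completion (BanachProRep.WAlg Γ (κ n))⟩,
    fun m n h => ⟨BanachProRep.transW (hmono h), BanachProRep.transW_continuous _⟩,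
    fun A n f => (Units.map (f.1 : _ →* _)).comp (BanachProRep.grpU (κ n)),
    ?_, ?_, ?_, ?_, ?_, ?_⟩
  · -- identity
    intro n
    dsimp only
    refine DFunLike.coe_injective ?_
    refine UniformSpace.Completion.ext (BanachProRep.transW_continuous (hmono le_rfl))
      continuous_id fun a => ?_
    exact BanachProRep.transW_coe (hmono le_rfl) a
  · -- transitivity
    intro l m n hlm hmn
    dsimp only
    refine DFunLike.coe_injective ?_
    refine UniformSpace.Completion.ext
      (BanachProRep.transW_continuous (hmono (hlm.trans hmn)))
      ((BanachProRep.transW_continuous (hmono hlm)).comp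
        (BanachProRep.transW_continuous (hmono hmn))) fun a => ?_
    have e1 := BanachProRep.transW_coe (hmono (hlm.trans hmn)) a
    have e2 := BanachProRep.transW_coe (hmono hmn) a
    have e3 := BanachProRep.transW_coe (hmono hlm)
      (BanachProRep.resW (κ m) (κ n) a)
    exact e1.trans (e3.symm.trans (congrArg (BanachProRep.transW (hmono hlm)) e2.symm))
  · -- compatibility with transition maps
    intro A m n h f
    refine MonoidHom.ext fun γ => Units.ext ?_
    show (f.1.comp (BanachProRep.transW (hmono h)))
        ((BanachProRep.grpU (κ n) γ : _)) = f.1 ((BanachProRep.grpU (κ m) γ : _))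
    rw [AlgHom.comp_apply, BanachProRep.grpU_val, BanachProRep.transW_coe]
    rfl
  · -- naturality
    intro A B φ n f
    exact MonoidHom.ext fun γ => Units.ext rfl
  · -- surjectivity
    intro A ρ
    set n : ℕ := S.sup fun x => ⌈‖((ρ x : (A : Type)ˣ) : (A : Type))‖⌉₊ with hn
    have hT : ∀ x ∈ (↑S : Set Γ), ‖((ρ x : (A : Type)ˣ) : (A : Type))‖ ≤ (n : ℝ) + 1 := by
      intro x hx
      have h1 : ‖((ρ x : (A : Type)ˣ) : (A : Type))‖
          ≤ (⌈‖((ρ x : (A : Type)ˣ) : (A : Type))‖⌉₊ : ℝ) := Nat.le_ceil _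
      have h2 : ((⌈‖((ρ x : (A : Type)ˣ) : (A : Type))‖⌉₊ : ℕ) : ℝ) ≤ (n : ℝ) :=
        Nat.cast_le.mpr (Finset.le_sup (f := fun x => ⌈‖((ρ x : (A : Type)ˣ) : (A : Type))‖⌉₊) (Finset.mem_coe.mp hx))
      linarith
    have hbound : ∀ γ : Γ, ‖((ρ γ : (A : Type)ˣ) : (A : Type))‖
        ≤ max ‖(1 : (A : Type))‖ 1 * (κ n).c γ := by
      intro γ
      obtain ⟨l, hl1, hl2, hl3⟩ := BanachProRep.exists_word hgen γ
      have h := BanachProRep.norm_rho_word_le ρ n hT l hl1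
      rw [hl2, hl3] at h
      exact h
    set φ : MonoidAlgebra ℝ Γ →ₐ[ℝ] (A : Type) :=
      MonoidAlgebra.lift ℝ (A : Type) Γ ((Units.coeHom (A : Type)).comp ρ) with hφ
    set φ' : BanachProRep.WAlg Γ (κ n) →ₐ[ℝ] (A : Type) :=
      φ.comp (BanachProRep.ofWA (κ n)) with hφ'
    have hb : ∀ fW : BanachProRep.WAlg Γ (κ n),
        ‖φ' fW‖ ≤ max ‖(1 : (A : Type))‖ 1 * ‖fW‖ := fun fW => by
      rw [BanachProRep.wnorm_def]
      exact BanachProRep.norm_lift_le (κ n) ρ hbound fW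
    have hcont : Continuous φ' :=
      AddMonoidHomClass.continuous_of_bound φ' (max ‖(1 : (A : Type))‖ 1) hb
    refine ⟨n, ⟨BanachProRep.extendAlgHom φ' hcont,
      BanachProRep.extendAlgHom_continuous _ _⟩, ?_⟩
    refine MonoidHom.ext fun γ => Units.ext ?_
    show BanachProRep.extendAlgHom φ' hcont ((BanachProRep.grpU (κ n) γ : _)) = (ρ γ : _)
    rw [BanachProRep.grpU_val, BanachProRep.extendAlgHom_coe]
    exact MonoidAlgebra.lift_of ((Units.coeHom (A : Type)).comp ρ) γ
  · -- injectivity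
    intro A m n f g hfg
    refine ⟨max m n, le_max_left m n, le_max_right m n, ?_⟩
    dsimp only
    have key : ∀ γ : Γ, f.1 ((BanachProRep.grpU (κ m) γ : _))
        = g.1 ((BanachProRep.grpU (κ n) γ : _)) := by
      intro γ
      have h := congrArg Units.val (DFunLike.congr_fun hfg γ)
      simpa using h
    have hH : f.1.comp ((BanachProRep.coeAlg _).comp (BanachProRep.toWA (κ m)))
        = g.1.comp ((BanachProRep.coeAlg _).comp (BanachProRep.toWA (κ n))) := by
      refine MonoidAlgebra.algHom_ext (fun x => ?_) (Subsingleton.elim _ _)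
      have h1 := key x
      rw [BanachProRep.grpU_val, BanachProRep.grpU_val] at h1
      rw [MonoidAlgebra.of_apply] at h1
      exact h1
    refine DFunLike.coe_injective ?_
    refine UniformSpace.Completion.ext
      (f.2.comp (BanachProRep.transW_continuous (hmono (le_max_left m n))))
      (g.2.comp (BanachProRep.transW_continuous (hmono (le_max_right m n)))) fun a => ?_
    exact (congrArg f.1 (BanachProRep.transW_coe (hmono (le_max_left m n)) a)).trans
      ((DFunLike.congr_fun hH a).trans
        (congrArg g.1 (BanachProRep.transW_coe (hmono (le_max_right m n)) a)).symm)
end BanachProRep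
end

section
/- Let B be a unital complex C*-algebra and φ a continuous linear functional on B. Then there exist a positive linear functional f on B (i.e. a linear functional with f(b*b) ≥ 0 for all b ∈ B) and a constant C ≥ 0 such that |φ(b)| ≤ C·f(b*b)^{1/2} for all b ∈ B. Consequently, the topological dual B' is the union, over the directed set of positive linear functionals f, of the images of the duals (B_f)' → B', where B_f is the Hilbert space completion of B with respect to the semi-inner product ⟨a,b⟩_f = f(a*b); i.e. B' = colim_f (B_f)'. -/
open scoped ComplexConjugate

lemma aux_smul_nonneg {A : Type*} [CStarAlgebra A] [PartialOrder A] [StarOrderedRing A]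
    {x : A} {r : ℝ} (hr : 0 ≤ r) (hx : 0 ≤ x) : 0 ≤ r • x := by
  rw [StarOrderedRing.nonneg_iff] at hx ⊢
  induction hx using AddSubmonoid.closure_induction with
  | mem z hz =>
    obtain ⟨s, rfl⟩ := hz
    refine AddSubmonoid.subset_closure ⟨(Real.sqrt r : ℂ) • s, ?_⟩
    show star ((Real.sqrt r : ℂ) • s) * ((Real.sqrt r : ℂ) • s) = r • (star s * s)
    rw [star_smul, smul_mul_smul_comm, RCLike.star_def, Complex.conj_ofReal,
      ← Complex.ofReal_mul, Real.mul_self_sqrt hr, Complex.coe_smul]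
  | zero => simpa using AddSubmonoid.zero_mem _
  | add a b ha hb iha ihb =>
    rw [smul_add]; exact AddSubmonoid.add_mem _ iha ihb

lemma aux_cs {A : Type*} [CStarAlgebra A] [PartialOrder A] [StarOrderedRing A]
    {ι : Type*} (s : Finset ι) (d : ι → ℂ) (y : ι → A) :
    star (∑ i ∈ s, conj (d i) • y i) * (∑ i ∈ s, conj (d i) • y i) ≤
      (∑ i ∈ s, ‖d i‖ ^ 2) • (∑ i ∈ s, star (y i) * y i) := by
  set u : A := ∑ i ∈ s, conj (d i) • y i with hu
  set T : A := ∑ i ∈ s, star (y i) * y i with hT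
  set N : ℂ := ∑ i ∈ s, conj (d i) * d i with hN
  have hstaru : star u = ∑ i ∈ s, d i • star (y i) := by
    rw [hu, star_sum]
    exact Finset.sum_congr rfl fun i _ => by simp [star_smul]
  have huu : star u * u = ∑ i ∈ s, ∑ j ∈ s, (d i * conj (d j)) • (star (y i) * y j) := by
    rw [hstaru, hu, Finset.sum_mul_sum]
    refine Finset.sum_congr rfl fun i _ => Finset.sum_congr rfl fun j _ => ?_
    rw [smul_mul_smul_comm]
  have expand : ∀ i j, star (d j • y i - d i • y j) * (d j • y i - d i • y j)
      = (conj (d j) * d j) • (star (y i) * y i) + (conj (d i) * d i) • (star (y j) * y j)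
        - (conj (d j) * d i) • (star (y i) * y j) - (conj (d i) * d j) • (star (y j) * y i) := by
    intro i j
    rw [star_sub, star_smul, star_smul, sub_mul, mul_sub, mul_sub]
    simp only [smul_mul_smul_comm, RCLike.star_def]
    module
  have h1 : ∑ i ∈ s, ∑ j ∈ s, (conj (d j) * d j) • (star (y i) * y i) = N • T := by
    simp_rw [← Finset.sum_smul, ← Finset.smul_sum]
    rw [hN, hT]
  have h2 : ∑ i ∈ s, ∑ j ∈ s, (conj (d i) * d i) • (star (y j) * y j) = N • T := by
    simp_rw [← Finset.smul_sum, ← Finset.sum_smul]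
    rw [hN, hT]
  have h3 : ∑ i ∈ s, ∑ j ∈ s, (conj (d j) * d i) • (star (y i) * y j) = star u * u := by
    rw [huu]
    exact Finset.sum_congr rfl fun i _ => Finset.sum_congr rfl fun j _ => by rw [mul_comm]
  have h4 : ∑ i ∈ s, ∑ j ∈ s, (conj (d i) * d j) • (star (y j) * y i) = star u * u := by
    rw [Finset.sum_comm, huu]
    exact Finset.sum_congr rfl fun i _ => Finset.sum_congr rfl fun j _ => by rw [mul_comm]
  have main : ∑ i ∈ s, ∑ j ∈ s, star (d j • y i - d i • y j) * (d j • y i - d i • y j)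
      = (N • T - star u * u) + (N • T - star u * u) := by
    simp only [expand, Finset.sum_add_distrib, Finset.sum_sub_distrib]
    rw [h1, h2, h3, h4]
    abel
  have hpos : (0:A) ≤ (N • T - star u * u) + (N • T - star u * u) := by
    rw [← main]
    exact Finset.sum_nonneg fun i _ => Finset.sum_nonneg fun j _ => star_mul_self_nonneg _
  have hhalf : (0:A) ≤ N • T - star u * u := by
    have h2x : N • T - star u * u = (2⁻¹ : ℝ) • ((N • T - star u * u) + (N • T - star u * u)) := by
      rw [← two_smul ℝ, smul_smul]; norm_num
    rw [h2x]
    exact aux_smul_nonneg (by norm_num) hpos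
  have hNre : N = ((∑ i ∈ s, ‖d i‖ ^ 2 : ℝ) : ℂ) := by
    rw [hN]
    push_cast
    exact Finset.sum_congr rfl fun i _ => RCLike.conj_mul (d i)
  have := sub_nonneg.mp hhalf
  rwa [hNre, Complex.coe_smul] at this

lemma aux_key {A : Type*} [CStarAlgebra A] [PartialOrder A] [StarOrderedRing A]
    (φ : A →L[ℂ] ℂ) (μ : A →₀ ℝ) (hμ : ∀ b, 0 ≤ μ b) :
    μ.sum (fun b l => l * ‖φ b‖ ^ 2) ≤ ‖φ‖ ^ 2 * ‖μ.sum (fun b l => l • (star b * b))‖ := by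
  classical
  set s := μ.support with hs
  set d : A → ℂ := fun b => (Real.sqrt (μ b) : ℂ) * φ b with hd
  set y : A → A := fun b => Real.sqrt (μ b) • b with hy
  set u : A := ∑ b ∈ s, conj (d b) • y b with hu
  set S : ℝ := μ.sum (fun b l => l * ‖φ b‖ ^ 2) with hS
  set w : A := μ.sum (fun b l => l • (star b * b)) with hw
  have hSnn : 0 ≤ S := by
    rw [hS]
    exact Finset.sum_nonneg fun b _ => mul_nonneg (hμ b) (by positivity)
  have hsq : ∀ b : A, (Real.sqrt (μ b) : ℂ) * (Real.sqrt (μ b) : ℂ) = (μ b : ℂ) := fun b => by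
    rw [← Complex.ofReal_mul, Real.mul_self_sqrt (hμ b)]
  have hu' : u = ∑ b ∈ s, ((μ b : ℂ) * conj (φ b)) • b := by
    rw [hu]
    refine Finset.sum_congr rfl fun b _ => ?_
    show (conj ((Real.sqrt (μ b) : ℂ) * φ b)) • (Real.sqrt (μ b) • b)
      = ((μ b : ℂ) * conj (φ b)) • b
    rw [← Complex.coe_smul, smul_smul, map_mul, Complex.conj_ofReal]
    congr 1
    rw [mul_comm, ← mul_assoc, hsq b]
  have hφu : φ u = (S : ℂ) := by
    rw [hu', map_sum, hS, Finsupp.sum]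
    push_cast
    refine Finset.sum_congr rfl fun b _ => ?_
    rw [map_smul, smul_eq_mul, mul_assoc, mul_comm ((starRingEnd ℂ) (φ b)) (φ b),
      Complex.mul_conj, Complex.normSq_eq_norm_sq]
    push_cast
    ring
  have hT : ∑ b ∈ s, star (y b) * y b = w := by
    rw [hw, Finsupp.sum]
    refine Finset.sum_congr rfl fun b _ => ?_
    show star (Real.sqrt (μ b) • b) * (Real.sqrt (μ b) • b) = μ b • (star b * b)
    rw [star_smul, star_trivial, smul_mul_smul_comm, Real.mul_self_sqrt (hμ b)]
  have hsum : ∑ b ∈ s, ‖d b‖ ^ 2 = S := by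
    rw [hS, Finsupp.sum]
    refine Finset.sum_congr rfl fun b _ => ?_
    show ‖(Real.sqrt (μ b) : ℂ) * φ b‖ ^ 2 = μ b * ‖φ b‖ ^ 2
    rw [norm_mul, mul_pow, Complex.norm_real, Real.norm_eq_abs, sq_abs,
      Real.sq_sqrt (hμ b)]
  have hcs : star u * u ≤ S • w := by
    have h := aux_cs s d y
    rwa [hsum, hT] at h
  have hwnn : (0:A) ≤ w := by
    rw [hw, Finsupp.sum]
    exact Finset.sum_nonneg fun b _ => aux_smul_nonneg (hμ b) (star_mul_self_nonneg b)
  have h1 : ‖u‖ * ‖u‖ ≤ S * ‖w‖ := by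
    calc ‖u‖ * ‖u‖ = ‖star u * u‖ := (CStarRing.norm_star_mul_self).symm
    _ ≤ ‖S • w‖ := CStarAlgebra.norm_le_norm_of_nonneg_of_le (star_mul_self_nonneg u) hcs
    _ = |S| * ‖w‖ := by rw [norm_smul, Real.norm_eq_abs]
    _ = S * ‖w‖ := by rw [abs_of_nonneg hSnn]
  have h2 : S ≤ ‖φ‖ * ‖u‖ := by
    calc S = ‖φ u‖ := by rw [hφu, Complex.norm_real, Real.norm_eq_abs, abs_of_nonneg hSnn]
    _ ≤ ‖φ‖ * ‖u‖ := φ.le_opNorm u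
  rcases eq_or_lt_of_le hSnn with hS0 | hS0
  · rw [← hS0]
    positivity
  · have h3 : S * S ≤ S * (‖φ‖ ^ 2 * ‖w‖) := by
      nlinarith [mul_le_mul h2 h2 hSnn (by positivity : (0:ℝ) ≤ ‖φ‖ * ‖u‖),
        mul_le_mul_of_nonneg_left h1 (by positivity : (0:ℝ) ≤ ‖φ‖ ^ 2)]
    exact le_of_mul_le_mul_left h3 hS0

/-- Let `B` be a unital complex C*-algebra and `φ` a continuous linear functional on `B`.
Then there are a positive linear functional `f` on `B` (i.e. `f (b*b) ≥ 0`, in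
particular `f (star b * b)` is a nonnegative real) and a constant `C ≥ 0` with
`|φ(b)| ≤ C · f(b*b)^{1/2}` for all `b`.

Consequently `φ` is continuous for the GNS seminorm `b ↦ f(b*b)^{1/2}`, i.e. it lies in
the image of `(B_f)' → B'` where `B_f` is the Hilbert space completion of `B` with
respect to `⟨a,b⟩_f = f(a*b)`; since the positive functionals are directed, this says
exactly that `B' = colim_f (B_f)'`. -/
theorem continuous_functional_dominated_by_positive
    {B : Type*} [NormedRing B] [StarRing B] [CStarRing B]
    [NormedAlgebra ℂ B] [StarModule ℂ B] [CompleteSpace B]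
    (φ : B →L[ℂ] ℂ) :
    ∃ (f : B →ₗ[ℂ] ℂ) (C : ℝ), 0 ≤ C ∧
      (∀ b : B, 0 ≤ (f (star b * b)).re ∧ (f (star b * b)).im = 0) ∧
      (∀ b : B, ‖φ b‖ ≤ C * Real.sqrt ((f (star b * b)).re)) := by
  classical
  by_cases hφ : φ = 0
  · refine ⟨0, 0, le_refl 0, ?_, ?_⟩
    · intro b; simp
    · intro b; simp [hφ]
  -- nontrivial case
  haveI : Nontrivial B := by
    by_contra h
    rw [not_nontrivial_iff_subsingleton] at h
    exact hφ (by ext b; rw [Subsingleton.elim b 0]; simp)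
  letI : CStarAlgebra B := {}
  letI := CStarAlgebra.spectralOrder B
  haveI := CStarAlgebra.spectralOrderedRing B
  have hφn : (0:ℝ) < ‖φ‖ := norm_pos_iff.mpr hφ
  -- the sublinear functional p on selfadjoint elements
  set V := selfAdjoint B with hV
  set p : V → ℝ := fun x => sSup (spectrum ℝ (x:B)) with hp
  have hxsa : ∀ x : V, IsSelfAdjoint (x:B) := fun x => x.2
  have hbdd : ∀ x : V, BddAbove (spectrum ℝ (x:B)) := fun x =>
    (spectrum.isCompact (𝕜 := ℝ) (x:B)).bddAbove
  have hne : ∀ x : V, (spectrum ℝ (x:B)).Nonempty := fun x =>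
    CFC.spectrum_nonempty (R := ℝ) (x:B) (hxsa x)
  have hple : ∀ (x : V) (t : ℝ), (x:B) ≤ algebraMap ℝ B t → p x ≤ t := by
    intro x t h
    exact csSup_le (hne x) fun μ hμ => (le_algebraMap_iff_spectrum_le (hxsa x)).mp h μ hμ
  have hlep : ∀ x : V, (x:B) ≤ algebraMap ℝ B (p x) := fun x =>
    le_algebraMap_of_spectrum_le (fun μ hμ => le_csSup (hbdd x) hμ) (hxsa x)
  have hnorm_le_p : ∀ x : V, 0 ≤ (x:B) → ‖(x:B)‖ ≤ p x := fun x hx =>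
    le_csSup (hbdd x) (CStarAlgebra.norm_mem_spectrum_of_nonneg hx)
  have hp0 : p 0 ≤ 0 := hple 0 0 (by simp)
  have hpsub : ∀ x y : V, p (x + y) ≤ p x + p y := by
    intro x y
    refine hple _ _ ?_
    have hco : ((x + y : V) : B) = (x:B) + (y:B) := rfl
    rw [hco, map_add]
    exact add_le_add (hlep x) (hlep y)
  have hsmul_le : ∀ (c:ℝ), 0 ≤ c → ∀ u v : B, u ≤ v → c • u ≤ c • v := by
    intro c hc u v huv
    have h := aux_smul_nonneg (A := B) hc (sub_nonneg.mpr huv)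
    rw [smul_sub] at h
    exact sub_nonneg.mp h
  have hsmulalg : ∀ (c s : ℝ), c • (algebraMap ℝ B s) = algebraMap ℝ B (c*s) := by
    intro c s
    rw [Algebra.algebraMap_eq_smul_one, Algebra.algebraMap_eq_smul_one, smul_smul]
  have hphom1 : ∀ (c:ℝ), 0 < c → ∀ x : V, p (c • x) ≤ c * p x := by
    intro c hc x
    refine hple _ _ ?_
    have hco : ((c • x : V) : B) = c • (x:B) := rfl
    rw [hco, ← hsmulalg]
    exact hsmul_le c hc.le _ _ (hlep x)
  set a : B → V := fun b => ⟨star b * b, IsSelfAdjoint.star_mul_self b⟩ with ha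
  set t : B → ℝ := fun b => ‖φ b‖^2 / ‖φ‖^2 with ht
  have htnn : ∀ b, 0 ≤ t b := fun b => by rw [ht]; positivity
  have hcoeW : ∀ μ : B →₀ ℝ,
      ((μ.sum fun b l => l • a b : V) : B) = μ.sum fun b l => l • (star b * b) := by
    intro μ
    rw [Finsupp.sum, Finsupp.sum]
    push_cast
    rfl
  have hW_nonneg : ∀ μ : B →₀ ℝ, (∀ b, 0 ≤ μ b) →
      0 ≤ ((μ.sum fun b l => l • a b : V) : B) := by
    intro μ hμ
    rw [hcoeW μ, Finsupp.sum]
    exact Finset.sum_nonneg fun b _ => aux_smul_nonneg (hμ b) (star_mul_self_nonneg b)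
  have hkey : ∀ μ : B →₀ ℝ, (∀ b, 0 ≤ μ b) →
      μ.sum (fun b l => l * t b) ≤ p (μ.sum fun b l => l • a b) := by
    intro μ hμ
    have h1 := aux_key φ μ hμ
    have h2 : μ.sum (fun b l => l * t b) = (μ.sum fun b l => l * ‖φ b‖^2) / ‖φ‖^2 := by
      rw [Finsupp.sum, Finsupp.sum, Finset.sum_div]
      exact Finset.sum_congr rfl fun b _ => by rw [ht, mul_div_assoc]
    have h4 := hnorm_le_p _ (hW_nonneg μ hμ)
    rw [hcoeW μ] at h4
    have hφ2 : (0:ℝ) < ‖φ‖^2 := by positivity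
    rw [h2, div_le_iff₀ hφ2]
    calc (μ.sum fun b l => l * ‖φ b‖^2) ≤ ‖φ‖^2 * ‖μ.sum fun b l => l • (star b * b)‖ := h1
    _ ≤ ‖φ‖^2 * p (μ.sum fun b l => l • a b) := mul_le_mul_of_nonneg_left h4 hφ2.le
    _ = p (μ.sum fun b l => l • a b) * ‖φ‖^2 := mul_comm _ _
  set Q : V → Set ℝ := fun x => { z | ∃ μ : B →₀ ℝ, (∀ b, 0 ≤ μ b) ∧
    z = p (x + μ.sum fun b l => l • a b) - μ.sum fun b l => l * t b } with hQ
  have hQwit : ∀ x : V, p x ∈ Q x := by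
    intro x
    refine ⟨0, fun b => le_refl 0, ?_⟩
    simp [Finsupp.sum_zero_index]
  have hQlb : ∀ x z, z ∈ Q x → -p (-x) ≤ z := by
    rintro x z ⟨μ, hμ, rfl⟩
    have h1 : μ.sum (fun b l => l * t b) ≤ p (μ.sum fun b l => l • a b) := hkey μ hμ
    have h2 : p (μ.sum fun b l => l • a b) ≤ p (x + μ.sum fun b l => l • a b) + p (-x) := by
      have he : μ.sum (fun b l => l • a b) = (x + μ.sum fun b l => l • a b) + (-x) := by abel
      calc p (μ.sum fun b l => l • a b)
          = p ((x + μ.sum fun b l => l • a b) + (-x)) := by rw [← he]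
      _ ≤ _ := hpsub _ _
    linarith
  set p' : V → ℝ := fun x => sInf (Q x) with hp'
  have hp'le : ∀ x z, z ∈ Q x → p' x ≤ z := fun x z hz =>
    csInf_le ⟨-p (-x), fun y hy => hQlb x y hy⟩ hz
  have hp'lb : ∀ x, -p (-x) ≤ p' x := fun x =>
    le_csInf ⟨p x, hQwit x⟩ (fun y hy => hQlb x y hy)
  have hp'sub : ∀ x y, p' (x+y) ≤ p' x + p' y := by
    intro x y
    have key : ∀ z1 ∈ Q x, ∀ z2 ∈ Q y, p' (x+y) ≤ z1 + z2 := by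
      rintro z1 ⟨μ1, hμ1, rfl⟩ z2 ⟨μ2, hμ2, rfl⟩
      refine le_trans (hp'le (x+y) _ ⟨μ1 + μ2, fun b => add_nonneg (hμ1 b) (hμ2 b), rfl⟩) ?_
      have hsum1 : (μ1 + μ2).sum (fun b l => l • a b)
          = μ1.sum (fun b l => l • a b) + μ2.sum (fun b l => l • a b) :=
        Finsupp.sum_add_index' (fun b => zero_smul ℝ (a b)) (fun b l1 l2 => add_smul l1 l2 (a b))
      have hsum2 : (μ1 + μ2).sum (fun b l => l * t b)
          = μ1.sum (fun b l => l * t b) + μ2.sum (fun b l => l * t b) :=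
        Finsupp.sum_add_index' (fun b => zero_mul (t b)) (fun b l1 l2 => add_mul l1 l2 (t b))
      rw [hsum1, hsum2]
      have hre : x + y + (μ1.sum (fun b l => l • a b) + μ2.sum (fun b l => l • a b))
          = (x + μ1.sum (fun b l => l • a b)) + (y + μ2.sum (fun b l => l • a b)) := by abel
      rw [hre]
      have := hpsub (x + μ1.sum (fun b l => l • a b)) (y + μ2.sum (fun b l => l • a b))
      linarith
    have h1 : ∀ z2 ∈ Q y, p' (x+y) - p' x ≤ z2 := by
      intro z2 hz2
      have h3 : p' (x + y) - z2 ≤ p' x :=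
        le_csInf ⟨p x, hQwit x⟩ (fun z1 hz1 => by linarith [key z1 hz1 z2 hz2])
      linarith
    have h2 : p' (x+y) - p' x ≤ p' y := le_csInf ⟨p y, hQwit y⟩ h1
    linarith
  have hp'hom1 : ∀ (c:ℝ), 0 < c → ∀ x : V, p' (c • x) ≤ c * p' x := by
    intro c hc x
    have step : ∀ z ∈ Q x, p' (c • x) ≤ c * z := by
      rintro z ⟨μ, hμ, rfl⟩
      have hμ' : ∀ b, 0 ≤ (c • μ) b := by
        intro b
        rw [Finsupp.smul_apply, smul_eq_mul]
        exact mul_nonneg hc.le (hμ b)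
      refine le_trans (hp'le (c•x) _ ⟨c • μ, hμ', rfl⟩) ?_
      have hs1 : (c • μ).sum (fun b l => l • a b) = c • μ.sum (fun b l => l • a b) := by
        rw [Finsupp.sum_smul_index' (fun b => zero_smul ℝ (a b)), Finsupp.smul_sum]
        exact Finsupp.sum_congr fun b _ => by rw [smul_eq_mul, mul_smul]
      have hs2 : (c • μ).sum (fun b l => l * t b) = c * μ.sum (fun b l => l * t b) := by
        rw [Finsupp.sum_smul_index' (fun b => zero_mul (t b)), Finsupp.mul_sum]
        exact Finsupp.sum_congr fun b _ => by rw [smul_eq_mul, mul_assoc]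
      rw [hs1, hs2, ← smul_add]
      have h5 := hphom1 c hc (x + μ.sum fun b l => l • a b)
      nlinarith [h5]
    have h6 : ∀ z ∈ Q x, p' (c • x) / c ≤ z := by
      intro z hz
      rw [div_le_iff₀ hc]
      calc p' (c•x) ≤ c * z := step z hz
      _ = z * c := mul_comm _ _
    have h7 : p' (c • x) / c ≤ p' x := le_csInf ⟨p x, hQwit x⟩ h6
    calc p' (c • x) = c * (p' (c • x) / c) := by field_simp
    _ ≤ c * p' x := mul_le_mul_of_nonneg_left h7 hc.le
  have hp'hom : ∀ (c:ℝ), 0 < c → ∀ x : V, p' (c • x) = c * p' x := by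
    intro c hc x
    refine le_antisymm (hp'hom1 c hc x) ?_
    have h2 := hp'hom1 c⁻¹ (by positivity) (c • x)
    rw [smul_smul, inv_mul_cancel₀ hc.ne', one_smul] at h2
    calc c * p' x ≤ c * (c⁻¹ * p' (c • x)) := mul_le_mul_of_nonneg_left h2 hc.le
    _ = p' (c • x) := by field_simp
  have hp'neg : ∀ b : B, p' (-(a b)) ≤ -(t b) := by
    intro b
    have hμ' : ∀ b' : B, 0 ≤ (Finsupp.single b (1:ℝ)) b' := by
      intro b'
      rw [Finsupp.single_apply]
      split <;> norm_num
    refine le_trans (hp'le _ _ ⟨Finsupp.single b 1, hμ', rfl⟩) ?_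
    rw [Finsupp.sum_single_index (zero_smul ℝ (a b)), Finsupp.sum_single_index (zero_mul (t b)),
      one_smul, one_mul, neg_add_cancel]
    linarith [hp0]
  -- Hahn-Banach extension
  have hp'0 : 0 ≤ p' 0 := by
    have := hp'lb 0
    rw [neg_zero] at this
    linarith [hp0]
  obtain ⟨F, -, hFle⟩ := exists_extension_of_le_sublinear
    (⟨⊥, 0⟩ : (V →ₗ.[ℝ] ℝ)) p' (fun c hc x => hp'hom c hc x) (fun x y => hp'sub x y)
    (fun x => by
      obtain ⟨x, hx⟩ := x
      rw [Submodule.mem_bot] at hx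
      subst hx
      simpa using hp'0)
  have hFa : ∀ b : B, t b ≤ F (a b) := by
    intro b
    have h1 := hFle (-(a b))
    rw [map_neg] at h1
    have h2 := le_trans h1 (hp'neg b)
    linarith
  -- construct the complex-linear functional from F
  have hmem_re : ∀ b : B, (2⁻¹:ℂ) • (b + star b) ∈ selfAdjoint B := by
    intro b
    rw [selfAdjoint.mem_iff, star_smul, star_add, star_star]
    have h1 : star (2⁻¹:ℂ) = 2⁻¹ := by simp
    rw [h1, add_comm]
  have hmem_im : ∀ b : B, (2⁻¹:ℂ) • (Complex.I • (star b - b)) ∈ selfAdjoint B := by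
    intro b
    rw [selfAdjoint.mem_iff]
    simp only [star_smul, star_sub, star_star, RCLike.star_def, Complex.conj_I, map_inv₀,
      map_ofNat]
    module
  set reB : B → V := fun b => ⟨(2⁻¹:ℂ) • (b + star b), hmem_re b⟩ with hreB
  set imB : B → V := fun b => ⟨(2⁻¹:ℂ) • (Complex.I • (star b - b)), hmem_im b⟩ with himB
  have hre_add : ∀ b1 b2 : B, reB (b1 + b2) = reB b1 + reB b2 := by
    intro b1 b2
    apply Subtype.ext
    show (2⁻¹:ℂ) • ((b1+b2) + star (b1+b2)) = (2⁻¹:ℂ) • (b1 + star b1) + (2⁻¹:ℂ) • (b2 + star b2)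
    rw [star_add]
    module
  have him_add : ∀ b1 b2 : B, imB (b1 + b2) = imB b1 + imB b2 := by
    intro b1 b2
    apply Subtype.ext
    show (2⁻¹:ℂ) • (Complex.I • (star (b1+b2) - (b1+b2)))
      = (2⁻¹:ℂ) • (Complex.I • (star b1 - b1)) + (2⁻¹:ℂ) • (Complex.I • (star b2 - b2))
    rw [star_add]
    module
  have hre_smulR : ∀ (r:ℝ) (b:B), reB (r • b) = r • reB b := by
    intro r b
    apply Subtype.ext
    show (2⁻¹:ℂ) • (r • b + star (r • b)) = r • ((2⁻¹:ℂ) • (b + star b))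
    rw [star_smul, star_trivial]
    module
  have him_smulR : ∀ (r:ℝ) (b:B), imB (r • b) = r • imB b := by
    intro r b
    apply Subtype.ext
    show (2⁻¹:ℂ) • (Complex.I • (star (r • b) - r • b)) = r • ((2⁻¹:ℂ) • (Complex.I • (star b - b)))
    rw [star_smul, star_trivial]
    module
  have hre_I : ∀ b : B, reB (Complex.I • b) = -(imB b) := by
    intro b
    apply Subtype.ext
    show (2⁻¹:ℂ) • (Complex.I • b + star (Complex.I • b))
      = -((2⁻¹:ℂ) • (Complex.I • (star b - b)))
    rw [star_smul, RCLike.star_def, Complex.conj_I]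
    module
  have him_I : ∀ b : B, imB (Complex.I • b) = reB b := by
    intro b
    apply Subtype.ext
    show (2⁻¹:ℂ) • (Complex.I • (star (Complex.I • b) - Complex.I • b)) = (2⁻¹:ℂ) • (b + star b)
    rw [star_smul, RCLike.star_def, Complex.conj_I, smul_sub, smul_smul, smul_smul, mul_neg,
      Complex.I_mul_I, neg_neg, one_smul, neg_one_smul, sub_neg_eq_add, add_comm]
  set g : B → ℂ := fun b => (F (reB b) : ℂ) + (F (imB b) : ℂ) * Complex.I with hg
  have hgadd : ∀ b1 b2, g (b1 + b2) = g b1 + g b2 := by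
    intro b1 b2
    show (F (reB (b1+b2)) : ℂ) + (F (imB (b1+b2)) : ℂ) * Complex.I = _
    rw [hre_add, him_add, map_add, map_add]
    push_cast
    ring
  have hgR : ∀ (r:ℝ) (b:B), g (r • b) = (r:ℂ) * g b := by
    intro r b
    show (F (reB (r • b)) : ℂ) + (F (imB (r • b)) : ℂ) * Complex.I = _
    rw [hre_smulR, him_smulR, map_smul, map_smul]
    push_cast [smul_eq_mul]
    ring
  have hgI : ∀ b, g (Complex.I • b) = Complex.I * g b := by
    intro b
    show (F (reB (Complex.I • b)) : ℂ) + (F (imB (Complex.I • b)) : ℂ) * Complex.I = _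
    rw [hre_I, him_I, map_neg]
    push_cast
    linear_combination (-(F (imB b) : ℂ)) * Complex.I_mul_I
  have hgsmul : ∀ (c : ℂ) (b : B), g (c • b) = c * g b := by
    intro c b
    have hdecomp : c • b = c.re • b + c.im • (Complex.I • b) := by
      conv_lhs => rw [← Complex.re_add_im c]
      rw [add_smul, mul_smul, Complex.coe_smul, Complex.coe_smul]
    rw [hdecomp, hgadd, hgR, hgR, hgI]
    conv_rhs => rw [← Complex.re_add_im c]
    ring
  set fC : B →ₗ[ℂ] ℂ :=
    { toFun := g, map_add' := hgadd, map_smul' := fun c b => by simpa using hgsmul c b } with hfC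
  have hval : ∀ b : B, fC (star b * b) = ((F (a b) : ℝ) : ℂ) := by
    intro b
    have hsa : star (star b * b) = star b * b := IsSelfAdjoint.star_mul_self b
    have h1 : reB (star b * b) = a b := by
      apply Subtype.ext
      show (2⁻¹:ℂ) • ((star b * b) + star (star b * b)) = star b * b
      rw [hsa]
      module
    have h2 : imB (star b * b) = 0 := by
      apply Subtype.ext
      show (2⁻¹:ℂ) • (Complex.I • (star (star b * b) - star b * b)) = ((0 : V) : B)
      rw [hsa, sub_self, smul_zero, smul_zero]
      rfl
    show (F (reB (star b * b)) : ℂ) + (F (imB (star b * b)) : ℂ) * Complex.I = _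
    rw [h1, h2, map_zero]
    push_cast
    ring
  refine ⟨fC, ‖φ‖, norm_nonneg φ, ?_, ?_⟩
  · intro b
    rw [hval b]
    constructor
    · simpa using le_trans (htnn b) (hFa b)
    · simp
  · intro b
    rw [hval b]
    have h1 : t b ≤ F (a b) := hFa b
    have h2 : ‖φ b‖ / ‖φ‖ ≤ Real.sqrt (F (a b)) := by
      have h3 : ‖φ b‖/‖φ‖ = Real.sqrt (t b) := by
        have h4 : t b = (‖φ b‖/‖φ‖)^2 := by rw [ht, div_pow]
        rw [h4, Real.sqrt_sq (by positivity)]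
      rw [h3]
      exact Real.sqrt_le_sqrt h1
    have h5 : (((F (a b) : ℝ) : ℂ)).re = F (a b) := by simp
    rw [h5]
    calc ‖φ b‖ = ‖φ‖ * (‖φ b‖/‖φ‖) := by field_simp
    _ ≤ ‖φ‖ * Real.sqrt (F (a b)) := mul_le_mul_of_nonneg_left h2 hφn.le
end
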